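/- arXiv:2408.13649 — 2 statements merged into one kernel-verified Lean document; each statement's English description precedes it below -/
import Mathlib

section
/- Max-product power of the weighted adjacency matrix of a tree recovers path products: let T = (V, E) be a tree on d vertices with edge weights α_e ∈ [0,1], and let A be the V × V matrix with A_{ii} = 1, A_{ij} = α_{(i,j)} if (i,j) ∈ E, and A_{ij} = 0 otherwise. Define the max-product matrix product by (A ⊛ B)_{ij} = max_{k∈V} A_{ik} B_{kj}, and let A^d denote the d-th power of A with respect to ⊛. Then for all u, v ∈ V, (A^d)_{uv} = ∏_{e ∈ path(u,v)} α_e, the product of the weights along the unique path between u and v (empty product 1 when u = v). Consequently, if N ~ MPMRF(λ, α, T) then Cov(N_u, N_v) = λ (A^d)_{uv}. -/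
open MeasureTheory ProbabilityTheory
open scoped ProbabilityTheory ENNReal

/-- The Poisson probability mass function with mean `lam`, evaluated at `k`. -/
noncomputable def poissonProb (lam : ℝ) (k : ℕ) : ℝ :=
  Real.exp (-lam) * lam ^ k / (Nat.factorial k)

/-- The MPMRF construction: a tree-structured Markov random field with Poisson(`lam`)
marginals, built on a tree `G` rooted at `root` via the stochastic representation
`N_root = L_root` and `N_v = α_{(pa v, v)} ∘ N_{pa v} + L_v` for `v ≠ root`, where `∘`
denotes binomial thinning (realized through the i.i.d. Bernoulli indicators `I v i`),
the innovations `L_v` are Poisson, and all innovations and indicator sequences are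
mutually independent. -/
structure MPMRF {V : Type} [Fintype V] [DecidableEq V]
    (G : SimpleGraph V) (lam : ℝ) (alpha : Sym2 V → ℝ)
    (Ω : Type) [MeasureSpace Ω] : Type where
  /-- the underlying graph is a tree -/
  isTree : G.IsTree
  lam_pos : 0 < lam
  alpha_mem : ∀ e ∈ G.edgeSet, alpha e ∈ Set.Icc (0 : ℝ) 1
  /-- the chosen root -/
  root : V
  /-- the parent function of the rooted tree -/
  pa : V → V
  pa_adj : ∀ v, v ≠ root → G.Adj (pa v) v
  pa_dist : ∀ v, v ≠ root → G.dist root (pa v) + 1 = G.dist root v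
  /-- innovation random variables -/
  L : V → Ω → ℕ
  /-- Bernoulli indicators used in the binomial thinnings -/
  I : V → ℕ → Ω → ℕ
  /-- the components of the Markov random field -/
  N : V → Ω → ℕ
  meas_L : ∀ v, Measurable (L v)
  meas_I : ∀ v i, Measurable (I v i)
  meas_N : ∀ v, Measurable (N v)
  I_le_one : ∀ v i ω, I v i ω ≤ 1
  I_bern : ∀ v, v ≠ root → ∀ i,
    ℙ {ω | I v i ω = 1} = ENNReal.ofReal (alpha s(pa v, v))
  L_root_poisson : ∀ k, ℙ {ω | L root ω = k} = ENNReal.ofReal (poissonProb lam k)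
  L_poisson : ∀ v, v ≠ root → ∀ k,
    ℙ {ω | L v ω = k} =
      ENNReal.ofReal (poissonProb (lam * (1 - alpha s(pa v, v))) k)
  /-- the innovations and all indicator variables are mutually independent -/
  indep : iIndepFun
    (Sum.elim L (fun p : V × ℕ => I p.1 p.2)) ℙ
  N_root : N root = L root
  N_rec : ∀ v, v ≠ root → ∀ ω,
    N v ω = (∑ i ∈ Finset.range (N (pa v) ω), I v i ω) + L v ω

/-- The max-product matrix product `(A ⊛ B)_{ij} = max_k A_{ik} B_{kj}`. -/
noncomputable def maxProd {V : Type} [Fintype V] [Nonempty V]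
    (A B : V → V → ℝ) : V → V → ℝ :=
  fun i j => Finset.univ.sup' Finset.univ_nonempty (fun k => A i k * B k j)

/-- Powers of a matrix with respect to the max-product matrix product
(`maxPow A 0` is the identity matrix). -/
noncomputable def maxPow {V : Type} [Fintype V] [Nonempty V] [DecidableEq V]
    (A : V → V → ℝ) : ℕ → V → V → ℝ
  | 0 => fun i j => if i = j then (1 : ℝ) else 0
  | (n + 1) => maxProd (maxPow A n) A

set_option linter.unusedSectionVars false
set_option maxHeartbeats 1000000

section TreeLemmas

variable {V : Type} [DecidableEq V] {G : SimpleGraph V}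

lemma list_prod_mem_Icc (alpha : Sym2 V → ℝ) (l : List (Sym2 V))
    (h : ∀ e ∈ l, alpha e ∈ Set.Icc (0:ℝ) 1) : (l.map alpha).prod ∈ Set.Icc (0:ℝ) 1 := by
  induction l with
  | nil => simp
  | cons a l ih =>
    have ha := h a (by simp)
    have hl := ih (fun e he => h e (by simp [he]))
    simp only [List.map_cons, List.prod_cons]
    exact ⟨mul_nonneg ha.1 hl.1, mul_le_one₀ ha.2 hl.1 hl.2⟩

noncomputable def treePath (hG : G.IsTree) (u v : V) : G.Walk u v :=
  (hG.existsUnique_path u v).choose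

lemma treePath_isPath (hG : G.IsTree) (u v : V) : (treePath hG u v).IsPath :=
  (hG.existsUnique_path u v).choose_spec.1

lemma eq_treePath (hG : G.IsTree) {u v : V} (p : G.Walk u v) (hp : p.IsPath) :
    p = treePath hG u v :=
  (hG.existsUnique_path u v).choose_spec.2 p hp

lemma isPath_length_eq_dist (hG : G.IsTree) {u v : V} (p : G.Walk u v) (hp : p.IsPath) :
    p.length = G.dist u v := by
  obtain ⟨q, hq, hql⟩ := hG.isConnected.exists_path_of_dist u v
  rw [eq_treePath hG p hp, ← eq_treePath hG q hq]
  exact hql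

lemma treePath_length (hG : G.IsTree) (u v : V) : (treePath hG u v).length = G.dist u v :=
  isPath_length_eq_dist hG _ (treePath_isPath hG u v)

/-- product of alpha over path edges -/
noncomputable def ppath (hG : G.IsTree) (alpha : Sym2 V → ℝ) (u v : V) : ℝ :=
  ((treePath hG u v).edges.map alpha).prod

lemma ppath_self (hG : G.IsTree) (alpha : Sym2 V → ℝ) (v : V) : ppath hG alpha v v = 1 := by
  rw [ppath, ← eq_treePath hG SimpleGraph.Walk.nil (SimpleGraph.Walk.IsPath.nil)]
  simp

lemma ppath_symm (hG : G.IsTree) (alpha : Sym2 V → ℝ) (u v : V) :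
    ppath hG alpha u v = ppath hG alpha v u := by
  rw [ppath, ppath, ← eq_treePath hG (treePath hG u v).reverse
    ((SimpleGraph.Walk.isPath_reverse_iff _).2 (treePath_isPath hG u v))]
  rw [SimpleGraph.Walk.edges_reverse, List.map_reverse, List.prod_reverse]

lemma ppath_mem_Icc (hG : G.IsTree) (alpha : Sym2 V → ℝ)
    (halpha : ∀ e ∈ G.edgeSet, alpha e ∈ Set.Icc (0:ℝ) 1) (u v : V) :
    ppath hG alpha u v ∈ Set.Icc (0:ℝ) 1 :=
  list_prod_mem_Icc alpha _ (fun e he => halpha e ((treePath hG u v).edges_subset_edgeSet he))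

lemma ppath_adj (hG : G.IsTree) (alpha : Sym2 V → ℝ) {u v : V} (h : G.Adj u v) :
    ppath hG alpha u v = alpha s(u, v) := by
  rw [ppath, ← eq_treePath hG (SimpleGraph.Walk.cons h SimpleGraph.Walk.nil)
    (by simp [SimpleGraph.Walk.cons_isPath_iff, h.ne])]
  simp

lemma dist_split (hG : G.IsTree) {u v x : V} (p : G.Walk u v) (hp : p.IsPath)
    (hx : x ∈ p.support) : G.dist u x + G.dist x v = G.dist u v := by
  have h1 := isPath_length_eq_dist hG _ (hp.takeUntil hx)
  have h2 := isPath_length_eq_dist hG _ (hp.dropUntil hx)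
  have h3 := isPath_length_eq_dist hG p hp
  rw [← h1, ← h2, ← h3, ← SimpleGraph.Walk.length_append]
  rw [SimpleGraph.Walk.take_spec p hx]

lemma ppath_split (hG : G.IsTree) (alpha : Sym2 V → ℝ) {u v x : V} (p : G.Walk u v)
    (hp : p.IsPath) (hx : x ∈ p.support) :
    ppath hG alpha u x * ppath hG alpha x v = ppath hG alpha u v := by
  rw [ppath, ppath, ppath, ← eq_treePath hG _ (hp.takeUntil hx),
    ← eq_treePath hG _ (hp.dropUntil hx), ← eq_treePath hG p hp,
    ← List.prod_append, ← List.map_append, ← SimpleGraph.Walk.edges_append,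
    SimpleGraph.Walk.take_spec p hx]

lemma mem_support_dist (hG : G.IsTree) {u v x : V} (hx : x ∈ (treePath hG u v).support) :
    G.dist u x + G.dist x v = G.dist u v :=
  dist_split hG _ (treePath_isPath hG u v) hx

end TreeLemmas


section RootedTree

variable {V : Type} [DecidableEq V] {G : SimpleGraph V} (hG : G.IsTree) {root : V} {pa : V → V}
variable (hpa : ∀ v, v ≠ root → G.Adj (pa v) v)
variable (hpd : ∀ v, v ≠ root → G.dist root (pa v) + 1 = G.dist root v)

omit [DecidableEq V] in
lemma isPath_concat' {u x v : V} (p : G.Walk u x) (h : G.Adj x v) (hp : p.IsPath)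
    (hv : v ∉ p.support) : (p.concat h).IsPath := by
  rw [← SimpleGraph.Walk.isPath_reverse_iff, SimpleGraph.Walk.reverse_concat,
    SimpleGraph.Walk.cons_isPath_iff]
  exact ⟨(SimpleGraph.Walk.isPath_reverse_iff p).2 hp,
    by rwa [SimpleGraph.Walk.support_reverse, List.mem_reverse]⟩

include hG hpa hpd

lemma not_mem_parentPath {v : V} (hv : v ≠ root) :
    v ∉ (treePath hG root (pa v)).support := by
  intro hmem
  have h1 := mem_support_dist hG hmem
  have h2 : G.dist v (pa v) = 1 := SimpleGraph.dist_eq_one_iff_adj.2 (hpa v hv).symm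
  have h3 := hpd v hv
  omega

lemma depth_of_adj_ne_pa {v x : V} (hv : v ≠ root) (hx : G.Adj x v) (hne : x ≠ pa v) :
    G.dist root x = G.dist root v + 1 := by
  by_cases hvx : v ∈ (treePath hG root x).support
  · have h1 := mem_support_dist hG hvx
    have h2 : G.dist v x = 1 := SimpleGraph.dist_eq_one_iff_adj.2 hx.symm
    omega
  · exfalso
    have hq : ((treePath hG root x).concat hx).IsPath :=
      isPath_concat' _ hx (treePath_isPath hG root x) hvx
    have hq' : ((treePath hG root (pa v)).concat (hpa v hv)).IsPath :=
      isPath_concat' _ (hpa v hv) (treePath_isPath hG root (pa v))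
        (not_mem_parentPath hG hpa hpd hv)
    have heq : (treePath hG root x).concat hx = (treePath hG root (pa v)).concat (hpa v hv) :=
      (eq_treePath hG _ hq).trans (eq_treePath hG _ hq').symm
    obtain ⟨hxv, -⟩ := SimpleGraph.Walk.concat_inj heq
    exact hne hxv

lemma dist_pa_aux : ∀ (d : ℕ) (u v : V), G.dist u v = d → u ≠ v → v ≠ root →
    G.dist root u ≤ G.dist root v → G.dist u v = G.dist u (pa v) + 1 := by
  intro d
  induction d using Nat.strong_induction_on with
  | _ d IH =>
  intro u v hd hne hvr hle
  have hlen : (treePath hG u v).length = G.dist u v := treePath_length hG u v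
  have hpos : 0 < G.dist u v := hG.isConnected.pos_dist_of_ne hne
  have hnn : ¬ (treePath hG u v).reverse.Nil := by
    rw [SimpleGraph.Walk.not_nil_iff_lt_length, SimpleGraph.Walk.length_reverse]
    omega
  obtain ⟨x, hvx, q, hq⟩ := SimpleGraph.Walk.not_nil_iff.mp hnn
  have hqpath : q.IsPath := by
    have h := (SimpleGraph.Walk.isPath_reverse_iff (treePath hG u v)).2
      (treePath_isPath hG u v)
    rw [hq] at h
    exact h.of_cons
  have hdux : G.dist u x = q.length := by
    rw [← SimpleGraph.dist_comm, ← isPath_length_eq_dist hG q hqpath]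
  have hqlen : G.dist u v = q.length + 1 := by
    have h5 : (treePath hG u v).reverse.length = q.length + 1 := by
      rw [hq, SimpleGraph.Walk.length_cons]
    rwa [SimpleGraph.Walk.length_reverse, hlen] at h5
  by_cases hxpa : x = pa v
  · rw [← hxpa]; omega
  · exfalso
    have hdx : G.dist root x = G.dist root v + 1 :=
      depth_of_adj_ne_pa hG hpa hpd hvr hvx.symm hxpa
    have hxu : u ≠ x := by
      intro h; rw [← h] at hdx; omega
    have hxr : x ≠ root := by
      intro h
      rw [h] at hdx
      simp [SimpleGraph.dist_self] at hdx
    have hIH := IH (d - 1) (by omega) u x (by omega) hxu hxr (by omega)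
    have hpax : v = pa x := by
      by_contra hvpa
      have := depth_of_adj_ne_pa hG hpa hpd hxr hvx hvpa
      omega
    rw [← hpax] at hIH
    omega

lemma dist_pa {u v : V} (hne : u ≠ v) (hvr : v ≠ root)
    (hle : G.dist root u ≤ G.dist root v) : G.dist u v = G.dist u (pa v) + 1 :=
  dist_pa_aux hG hpa hpd _ u v rfl hne hvr hle

lemma not_mem_treePath_pa {u v : V} (hne : u ≠ v) (hvr : v ≠ root)
    (hle : G.dist root u ≤ G.dist root v) : v ∉ (treePath hG u (pa v)).support := by
  intro hmem
  have h1 := mem_support_dist hG hmem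
  have h2 : G.dist v (pa v) = 1 := SimpleGraph.dist_eq_one_iff_adj.2 (hpa v hvr).symm
  have h3 := dist_pa hG hpa hpd hne hvr hle
  omega

lemma treePath_pa {u v : V} (hne : u ≠ v) (hvr : v ≠ root)
    (hle : G.dist root u ≤ G.dist root v) :
    (treePath hG u (pa v)).concat (hpa v hvr) = treePath hG u v :=
  eq_treePath hG _ (isPath_concat' _ (hpa v hvr) (treePath_isPath hG u (pa v))
    (not_mem_treePath_pa hG hpa hpd hne hvr hle))

lemma ppath_pa (alpha : Sym2 V → ℝ) {u v : V} (hne : u ≠ v) (hvr : v ≠ root)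
    (hle : G.dist root u ≤ G.dist root v) :
    ppath hG alpha u v = ppath hG alpha u (pa v) * alpha s(pa v, v) := by
  rw [ppath, ← treePath_pa hG hpa hpd hne hvr hle, SimpleGraph.Walk.edges_concat]
  simp [ppath, List.concat_eq_append]

end RootedTree

section MaxPowSec

variable {V : Type} [Fintype V] [DecidableEq V] [Nonempty V] {G : SimpleGraph V}
  [DecidableRel G.Adj] (hG : G.IsTree) (alpha : Sym2 V → ℝ)
  (halpha : ∀ e ∈ G.edgeSet, alpha e ∈ Set.Icc (0 : ℝ) 1) {A : V → V → ℝ}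
  (hA : ∀ i j : V, A i j = if i = j then 1 else if G.Adj i j then alpha s(i, j) else 0)

include halpha hA

lemma A_mem_Icc (i j : V) : A i j ∈ Set.Icc (0:ℝ) 1 := by
  rw [hA]
  by_cases h1 : i = j
  · simp [h1]
  · simp only [h1, if_false]
    by_cases h2 : G.Adj i j
    · simpa [h2] using halpha s(i,j) (G.mem_edgeSet.2 h2)
    · simp [h2]

lemma A_diag (i : V) : A i i = 1 := by simp [hA]

lemma maxPow_mem_Icc : ∀ n (u v : V), maxPow A n u v ∈ Set.Icc (0:ℝ) 1 := by
  intro n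
  induction n with
  | zero =>
    intro u v
    by_cases h : u = v <;> simp [maxPow, h]
  | succ n ih =>
    intro u v
    constructor
    · apply Finset.le_sup' (fun k => maxPow A n u k * A k v) (Finset.mem_univ u) |>.trans'
      exact mul_nonneg (ih u u).1 (A_mem_Icc alpha halpha hA u v).1
    · refine Finset.sup'_le Finset.univ_nonempty _ fun k _ => ?_
      exact mul_le_one₀ (ih u k).2 (A_mem_Icc alpha halpha hA k v).1
        (A_mem_Icc alpha halpha hA k v).2

lemma maxPow_succ_ge (n : ℕ) (u x v : V) :
    maxPow A n u x * A x v ≤ maxPow A (n+1) u v :=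
  Finset.le_sup' (fun k => maxPow A n u k * A k v) (Finset.mem_univ x)

lemma maxPow_mono (n : ℕ) (u v : V) : maxPow A n u v ≤ maxPow A (n+1) u v := by
  have h := maxPow_succ_ge alpha halpha hA n u v v
  rwa [A_diag alpha halpha hA, mul_one] at h

lemma one_le_maxPow_diag : ∀ n (u : V), 1 ≤ maxPow A n u u := by
  intro n
  induction n with
  | zero => intro u; simp [maxPow]
  | succ n ih => intro u; exact (ih u).trans (maxPow_mono alpha halpha hA n u u)

lemma maxPow_ge_walk : ∀ n (u v : V) (q : G.Walk u v), q.length ≤ n →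
    (q.edges.map alpha).prod ≤ maxPow A n u v := by
  intro n
  induction n with
  | zero =>
    intro u v q hlen
    have huv := SimpleGraph.Walk.eq_of_length_eq_zero (Nat.le_zero.mp hlen)
    subst huv
    have : q.edges = [] :=
      List.eq_nil_of_length_eq_zero (by rw [SimpleGraph.Walk.length_edges]; omega)
    simp [this, maxPow]
  | succ n ih =>
    intro u v q hlen
    by_cases h0 : q.length = 0
    · have huv := SimpleGraph.Walk.eq_of_length_eq_zero h0
      subst huv
      have : q.edges = [] :=
        List.eq_nil_of_length_eq_zero (by rw [SimpleGraph.Walk.length_edges]; omega)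
      simp only [this, List.map_nil, List.prod_nil]
      exact one_le_maxPow_diag alpha halpha hA (n+1) u
    · have hnn : ¬ q.reverse.Nil := by
        rw [SimpleGraph.Walk.not_nil_iff_lt_length, SimpleGraph.Walk.length_reverse]
        omega
      obtain ⟨x, hvx, r, hr⟩ := SimpleGraph.Walk.not_nil_iff.mp hnn
      have hq : q = r.reverse.concat hvx.symm := by
        rw [← SimpleGraph.Walk.reverse_reverse q, hr, SimpleGraph.Walk.reverse_cons]
        simp [SimpleGraph.Walk.concat_eq_append]
      have hrlen : r.reverse.length ≤ n := by
        have h1 : q.length = r.length + 1 := by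
          rw [hq, SimpleGraph.Walk.length_concat, SimpleGraph.Walk.length_reverse]
        rw [SimpleGraph.Walk.length_reverse]
        omega
      have hIH := ih u x r.reverse hrlen
      have hAxv : A x v = alpha s(x, v) := by
        rw [hA]
        simp [hvx.symm.ne, hvx.symm]
      calc (q.edges.map alpha).prod
          = (r.reverse.edges.map alpha).prod * alpha s(x, v) := by
            rw [hq, SimpleGraph.Walk.edges_concat]
            simp [List.concat_eq_append]
        _ ≤ maxPow A n u x * A x v := by
            rw [hAxv]
            apply mul_le_mul hIH le_rfl ?_ (maxPow_mem_Icc alpha halpha hA n u x).1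
            · have := halpha s(x,v) (G.mem_edgeSet.2 hvx.symm)
              exact this.1
        _ ≤ maxPow A (n+1) u v := maxPow_succ_ge alpha halpha hA n u x v

include hG

lemma ppath_mul_A_le (u k v : V) :
    ppath hG alpha u k * A k v ≤ ppath hG alpha u v := by
  by_cases hkv : k = v
  · subst hkv; rw [A_diag alpha halpha hA, mul_one]
  · by_cases hadj : G.Adj k v
    · have hAkv : A k v = alpha s(k, v) := by rw [hA]; simp [hkv, hadj]
      by_cases hv : v ∈ (treePath hG u k).support
      · have hsplit := ppath_split hG alpha _ (treePath_isPath hG u k) hv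
        have hvk : ppath hG alpha v k = alpha s(v, k) := ppath_adj hG alpha hadj.symm
        have hswap : s(v, k) = s(k, v) := Sym2.eq_swap
        have h1 := halpha s(k,v) (G.mem_edgeSet.2 hadj)
        have h2 := ppath_mem_Icc hG alpha halpha u v
        rw [← hsplit, hvk, hswap, hAkv]
        calc ppath hG alpha u v * alpha s(k, v) * alpha s(k, v)
            ≤ ppath hG alpha u v * 1 * 1 := by
              apply mul_le_mul (mul_le_mul le_rfl h1.2 h1.1 h2.1) h1.2 h1.1
              exact mul_nonneg h2.1 zero_le_one
          _ = ppath hG alpha u v := by ring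
      · have hpath : ((treePath hG u k).concat hadj).IsPath :=
          isPath_concat' _ hadj (treePath_isPath hG u k) hv
        have : ppath hG alpha u v = ppath hG alpha u k * alpha s(k, v) := by
          rw [ppath, ← eq_treePath hG _ hpath, SimpleGraph.Walk.edges_concat]
          simp [ppath, List.concat_eq_append]
        rw [this, hAkv]
    · have hAkv : A k v = 0 := by rw [hA]; simp [hkv, hadj]
      rw [hAkv, mul_zero]
      exact (ppath_mem_Icc hG alpha halpha u v).1

lemma maxPow_le_ppath : ∀ n (u v : V), maxPow A n u v ≤ ppath hG alpha u v := by
  intro n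
  induction n with
  | zero =>
    intro u v
    by_cases h : u = v
    · subst h; simp [maxPow, ppath_self]
    · simpa [maxPow, h] using (ppath_mem_Icc hG alpha halpha u v).1
  | succ n ih =>
    intro u v
    refine Finset.sup'_le Finset.univ_nonempty _ fun k _ => ?_
    calc maxPow A n u k * A k v ≤ ppath hG alpha u k * A k v := by
          apply mul_le_mul_of_nonneg_right (ih u k) (A_mem_Icc alpha halpha hA k v).1
      _ ≤ ppath hG alpha u v := ppath_mul_A_le hG alpha halpha hA u k v

theorem maxPow_card_eq_ppath (u v : V) :
    maxPow A (Fintype.card V) u v = ppath hG alpha u v := by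
  apply le_antisymm (maxPow_le_ppath hG alpha halpha hA (Fintype.card V) u v)
  have hlen : (treePath hG u v).length ≤ Fintype.card V :=
    le_of_lt (treePath_isPath hG u v).length_lt
  exact maxPow_ge_walk alpha halpha hA (Fintype.card V) u v (treePath hG u v) hlen

end MaxPowSec

section PoissonSums

variable {mu : ℝ}

lemma poissonProb_nonneg (hmu : 0 ≤ mu) (k : ℕ) : 0 ≤ poissonProb mu k := by
  unfold poissonProb; positivity

lemma poisson_hasSum (hmu : 0 ≤ mu) : HasSum (fun k => poissonProb mu k) 1 := by
  have h : HasSum (fun n : ℕ => mu ^ n / n.factorial) (Real.exp mu) := by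
    rw [Real.exp_eq_exp_ℝ]
    exact NormedSpace.expSeries_div_hasSum_exp mu
  have h2 := h.mul_left (Real.exp (-mu))
  have h3 : Real.exp (-mu) * Real.exp mu = 1 := by
    rw [← Real.exp_add]; simp
  rw [h3] at h2
  convert h2 using 2 with k
  · rfl
  unfold poissonProb
  ring

lemma poisson_hasSum_mean (hmu : 0 ≤ mu) :
    HasSum (fun k : ℕ => (k : ℝ) * poissonProb mu k) mu := by
  have h1 : HasSum (fun k : ℕ => (((k+1 : ℕ)) : ℝ) * poissonProb mu (k+1)) mu := by
    have h := (poisson_hasSum hmu).mul_left mu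
    rw [mul_one] at h
    convert h using 2 with k
    · rfl
    unfold poissonProb
    have hf : (Nat.factorial (k+1) : ℝ) = (k+1) * Nat.factorial k := by
      push_cast [Nat.factorial_succ]; ring
    have hk : (Nat.factorial k : ℝ) ≠ 0 := Nat.cast_ne_zero.2 (Nat.factorial_ne_zero k)
    have hk1 : ((k:ℝ)+1) ≠ 0 := by positivity
    push_cast
    rw [hf]
    field_simp
    ring
  refine (hasSum_nat_add_iff' (f := fun k : ℕ => (k : ℝ) * poissonProb mu k) 1).mp ?_
  simpa using h1

lemma poisson_hasSum_sq (hmu : 0 ≤ mu) :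
    HasSum (fun k : ℕ => (k : ℝ)^2 * poissonProb mu k) (mu^2 + mu) := by
  have hg : HasSum (fun k : ℕ => (k : ℝ) * ((k:ℝ) - 1) * poissonProb mu k) (mu^2) := by
    have h1 : HasSum (fun k : ℕ => (((k+2:ℕ)):ℝ) * (((k+2:ℕ):ℝ) - 1) * poissonProb mu (k+2))
        (mu^2) := by
      have h := (poisson_hasSum hmu).mul_left (mu^2)
      rw [mul_one] at h
      convert h using 2 with k
      · rfl
      unfold poissonProb
      have hf : (Nat.factorial (k+2) : ℝ) = (k+2) * ((k+1) * Nat.factorial k) := by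
        rw [Nat.factorial_succ, Nat.factorial_succ]
        push_cast
        ring
      have hk : (Nat.factorial k : ℝ) ≠ 0 := Nat.cast_ne_zero.2 (Nat.factorial_ne_zero k)
      have hk1 : ((k:ℝ)+1) ≠ 0 := by positivity
      have hk2 : ((k:ℝ)+2) ≠ 0 := by positivity
      push_cast
      rw [hf]
      field_simp
      ring
    refine (hasSum_nat_add_iff'
      (f := fun k : ℕ => (k : ℝ) * ((k:ℝ) - 1) * poissonProb mu k) 2).mp ?_
    have hz : (∑ i ∈ Finset.range 2, ((i:ℝ) * ((i:ℝ) - 1) * poissonProb mu i)) = 0 := by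
      norm_num [Finset.sum_range_succ]
    rw [hz, sub_zero]
    simpa using h1
  have := hg.add (poisson_hasSum_mean hmu)
  convert this using 2 with k
  ring

end PoissonSums

section PMFInt

variable {Ω : Type} [MeasureSpace Ω] [IsProbabilityMeasure (ℙ : Measure Ω)]

lemma lint_nat_eq_tsum {X : Ω → ℕ} (hX : Measurable X) (g : ℕ → ℝ≥0∞) :
    ∫⁻ ω, g (X ω) ∂ℙ = ∑' k, g k * ℙ {ω | X ω = k} := by
  have hpt : ∀ ω, g (X ω) = ∑' k, Set.indicator {ω | X ω = k} (fun _ => g k) ω := by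
    intro ω
    rw [tsum_eq_single (X ω)]
    · simp [Set.indicator_of_mem, Set.mem_setOf_eq]
    · intro k hk
      apply Set.indicator_of_notMem
      simp [Set.mem_setOf_eq]
      omega
  calc ∫⁻ ω, g (X ω) ∂ℙ
      = ∫⁻ ω, ∑' k, Set.indicator {ω | X ω = k} (fun _ => g k) ω ∂ℙ := by
        exact lintegral_congr hpt
    _ = ∑' k, ∫⁻ ω, Set.indicator {ω | X ω = k} (fun _ => g k) ω ∂ℙ := by
        apply lintegral_tsum
        intro k
        exact (measurable_const.indicator (hX (measurableSet_singleton k))).aemeasurable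
    _ = ∑' k, g k * ℙ {ω | X ω = k} := by
        congr 1
        funext k
        exact lintegral_indicator_const (hX (measurableSet_singleton k)) _

lemma lint_poisson_mean {X : Ω → ℕ} (hX : Measurable X) {mu : ℝ} (hmu : 0 ≤ mu)
    (hp : ∀ k, ℙ {ω | X ω = k} = ENNReal.ofReal (poissonProb mu k)) :
    ∫⁻ ω, (X ω : ℝ≥0∞) ∂ℙ = ENNReal.ofReal mu := by
  rw [lint_nat_eq_tsum hX (fun k => (k : ℝ≥0∞))]
  have : ∀ k : ℕ, (k : ℝ≥0∞) * ℙ {ω | X ω = k}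
      = ENNReal.ofReal ((k : ℝ) * poissonProb mu k) := by
    intro k
    rw [hp k, ENNReal.ofReal_mul (by positivity), ENNReal.ofReal_natCast]
  simp_rw [this]
  rw [← ENNReal.ofReal_tsum_of_nonneg
    (fun k => mul_nonneg (by positivity) (poissonProb_nonneg hmu k))
    (poisson_hasSum_mean hmu).summable, (poisson_hasSum_mean hmu).tsum_eq]

lemma lint_poisson_sq {X : Ω → ℕ} (hX : Measurable X) {mu : ℝ} (hmu : 0 ≤ mu)
    (hp : ∀ k, ℙ {ω | X ω = k} = ENNReal.ofReal (poissonProb mu k)) :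
    ∫⁻ ω, (X ω : ℝ≥0∞) ^ 2 ∂ℙ = ENNReal.ofReal (mu ^ 2 + mu) := by
  rw [lint_nat_eq_tsum hX (fun k => (k : ℝ≥0∞) ^ 2)]
  have : ∀ k : ℕ, (k : ℝ≥0∞) ^ 2 * ℙ {ω | X ω = k}
      = ENNReal.ofReal ((k : ℝ) ^ 2 * poissonProb mu k) := by
    intro k
    rw [hp k, ENNReal.ofReal_mul (by positivity)]
    congr 1
    rw [← ENNReal.ofReal_natCast k, ← ENNReal.ofReal_pow (by positivity)]
  simp_rw [this]
  rw [← ENNReal.ofReal_tsum_of_nonneg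
    (fun k => mul_nonneg (by positivity) (poissonProb_nonneg hmu k))
    (poisson_hasSum_sq hmu).summable, (poisson_hasSum_sq hmu).tsum_eq]

end PMFInt


section CS

variable {V : Type}

def csV (SV : Set V) : Set (V ⊕ V × ℕ) :=
  Sum.inl '' SV ∪ Sum.inr '' (SV ×ˢ (Set.univ : Set ℕ))

def csI (v : V) (J : Set ℕ) : Set (V ⊕ V × ℕ) := Sum.inr '' ({v} ×ˢ J)

@[simp] lemma mem_csV_inl {SV : Set V} {x : V} : Sum.inl x ∈ csV SV ↔ x ∈ SV := by
  simp [csV]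

@[simp] lemma mem_csV_inr {SV : Set V} {x : V} {i : ℕ} :
    (Sum.inr (x, i) : V ⊕ V × ℕ) ∈ csV SV ↔ x ∈ SV := by simp [csV]

@[simp] lemma mem_csI_inl {v : V} {J : Set ℕ} {x : V} :
    (Sum.inl x : V ⊕ V × ℕ) ∈ csI v J ↔ False := by simp [csI]

@[simp] lemma mem_csI_inr {v : V} {J : Set ℕ} {x : V} {i : ℕ} :
    (Sum.inr (x, i) : V ⊕ V × ℕ) ∈ csI v J ↔ x = v ∧ i ∈ J := by
  simp only [csI]
  constructor
  · rintro ⟨⟨a, b⟩, ⟨⟨h1, h2⟩, h3⟩⟩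
    simp only [Set.mem_singleton_iff] at h1
    cases h3
    exact ⟨h1, h2⟩
  · rintro ⟨rfl, hj⟩
    exact ⟨(x, i), ⟨rfl, hj⟩, rfl⟩

lemma csV_mono {SV TV : Set V} (h : SV ⊆ TV) : csV SV ⊆ csV TV := by
  rintro (x | ⟨x, i⟩) hx <;> simp only [mem_csV_inl, mem_csV_inr] at hx ⊢ <;> exact h hx

lemma disj_inl {SV : Set V} {v : V} (hv : v ∉ SV) :
    Disjoint (csV SV) {(Sum.inl v : V ⊕ V × ℕ)} :=
  Set.disjoint_singleton_right.mpr (by simpa using hv)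

lemma disj_inr {SV : Set V} {v : V} (hv : v ∉ SV) (i : ℕ) :
    Disjoint (csV SV) {(Sum.inr (v, i) : V ⊕ V × ℕ)} :=
  Set.disjoint_singleton_right.mpr (by simpa using hv)

lemma disj_union_inr {SV : Set V} {v : V} {J : Set ℕ} {i : ℕ} (hv : v ∉ SV) (hi : i ∉ J) :
    Disjoint (csV SV ∪ csI v J) {(Sum.inr (v, i) : V ⊕ V × ℕ)} :=
  Set.disjoint_singleton_right.mpr (by simp [hv, hi])

lemma disj_union_inl {SV : Set V} {v : V} {J : Set ℕ} (hv : v ∉ SV) :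
    Disjoint (csV SV ∪ csI v J) {(Sum.inl v : V ⊕ V × ℕ)} :=
  Set.disjoint_singleton_right.mpr (by simp [hv])

lemma csI_subset_union {SV : Set V} {v : V} {J : Set ℕ} :
    csI v J ⊆ csV SV ∪ csI v J := Set.subset_union_right

end CS

namespace MPMRF

variable {V : Type} [Fintype V] [DecidableEq V] {G : SimpleGraph V} {lam : ℝ}
  {alpha : Sym2 V → ℝ} {Ω : Type} [MeasureSpace Ω]
  (M : MPMRF G lam alpha Ω)

def coords : (V ⊕ V × ℕ) → Ω → ℕ := Sum.elim M.L fun p => M.I p.1 p.2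

lemma meas_coords : ∀ j, Measurable (M.coords j) := by
  rintro (v | ⟨v, i⟩)
  · exact M.meas_L v
  · exact M.meas_I v i

def mS (S : Set (V ⊕ V × ℕ)) : MeasurableSpace Ω :=
  ⨆ j ∈ S, MeasurableSpace.comap (M.coords j) inferInstance

lemma mS_le (S : Set (V ⊕ V × ℕ)) : M.mS S ≤ (inferInstance : MeasurableSpace Ω) :=
  iSup₂_le fun j _ => measurable_iff_comap_le.mp (M.meas_coords j)

lemma indep_mS {S T : Set (V ⊕ V × ℕ)} (h : Disjoint S T) :
    Indep (M.mS S) (M.mS T) ℙ :=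
  indep_iSup_of_disjoint (fun j => measurable_iff_comap_le.mp (M.meas_coords j)) M.indep h

lemma meas_coords_mS {S : Set (V ⊕ V × ℕ)} {j} (hj : j ∈ S) :
    Measurable[M.mS S] (M.coords j) :=
  measurable_iff_comap_le.mpr (le_iSup₂ (f := fun j (_ : j ∈ S) => MeasurableSpace.comap (M.coords j) inferInstance) j hj)

lemma mS_mono {S T : Set (V ⊕ V × ℕ)} (h : S ⊆ T) : M.mS S ≤ M.mS T :=
  biSup_mono h

lemma meas_L_mS {S : Set (V ⊕ V × ℕ)} {v : V} (hv : Sum.inl v ∈ S) :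
    Measurable[M.mS S] (M.L v) := M.meas_coords_mS hv

lemma meas_I_mS {S : Set (V ⊕ V × ℕ)} {v : V} {i : ℕ} (hv : (Sum.inr (v, i) : V ⊕ V × ℕ) ∈ S) :
    Measurable[M.mS S] (M.I v i) := M.meas_coords_mS hv

def step (x : V) : V := if x = M.root then x else M.pa x

def anc (v : V) : Set V := {x | ∃ k, (M.step)^[k] v = x}

def cs (v : V) : Set (V ⊕ V × ℕ) := csV (M.anc v)

lemma dist_root_eq_zero_iff {v : V} : G.dist M.root v = 0 ↔ v = M.root := by
  rw [M.isTree.isConnected.dist_eq_zero_iff]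
  exact eq_comm

lemma step_depth_le (x : V) : G.dist M.root (M.step x) ≤ G.dist M.root x := by
  by_cases hx : x = M.root
  · simp [step, hx]
  · have := M.pa_dist x hx
    simp only [step, hx, if_false]
    omega

lemma iter_step_depth_le : ∀ (k : ℕ) (x : V),
    G.dist M.root ((M.step)^[k] x) ≤ G.dist M.root x := by
  intro k
  induction k with
  | zero => intro x; simp
  | succ k ih =>
    intro x
    rw [Function.iterate_succ_apply]
    exact (ih (M.step x)).trans (M.step_depth_le x)

lemma anc_depth_le {x v : V} (h : x ∈ M.anc v) : G.dist M.root x ≤ G.dist M.root v := by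
  obtain ⟨k, rfl⟩ := h
  exact M.iter_step_depth_le k v

lemma step_iter_root (k : ℕ) : (M.step)^[k] M.root = M.root :=
  Function.iterate_fixed (by simp [step]) k

lemma anc_self (v : V) : v ∈ M.anc v := ⟨0, rfl⟩

lemma anc_eq_of_depth_eq {x v : V} (h : x ∈ M.anc v)
    (hd : G.dist M.root x = G.dist M.root v) : x = v := by
  obtain ⟨k, rfl⟩ := h
  by_cases hv : v = M.root
  · subst hv; exact M.step_iter_root k
  · cases k with
    | zero => rfl
    | succ k =>
      exfalso
      have h1 : (M.step)^[k+1] v = (M.step)^[k] (M.pa v) := by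
        rw [Function.iterate_succ_apply]
        simp [step, hv]
      have h2 := M.iter_step_depth_le k (M.pa v)
      have h3 := M.pa_dist v hv
      rw [h1] at hd
      omega

lemma anc_insert {v : V} (hv : v ≠ M.root) : M.anc v = insert v (M.anc (M.pa v)) := by
  ext x
  constructor
  · rintro ⟨k, rfl⟩
    cases k with
    | zero => left; rfl
    | succ k =>
      right
      refine ⟨k, ?_⟩
      rw [Function.iterate_succ_apply]
      simp [step, hv]
  · rintro (rfl | ⟨k, rfl⟩)
    · exact M.anc_self x
    · refine ⟨k + 1, ?_⟩
      rw [Function.iterate_succ_apply]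
      simp [step, hv]

lemma not_mem_anc {u v : V} (hne : u ≠ v) (hle : G.dist M.root u ≤ G.dist M.root v) :
    v ∉ M.anc u := by
  intro h
  have h1 := M.anc_depth_le h
  exact hne (M.anc_eq_of_depth_eq h (le_antisymm h1 hle)).symm

lemma not_mem_anc_pa {v : V} (hv : v ≠ M.root) : v ∉ M.anc (M.pa v) := by
  intro h
  have h1 := M.anc_depth_le h
  have h2 := M.pa_dist v hv
  omega

lemma anc_pa_subset {v : V} (hv : v ≠ M.root) : M.anc (M.pa v) ⊆ M.anc v := by
  rw [M.anc_insert hv]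
  exact Set.subset_insert _ _

lemma meas_N_mS : ∀ v, Measurable[M.mS (M.cs v)] (M.N v) := by
  have key : ∀ (d : ℕ) (v : V), G.dist M.root v = d → Measurable[M.mS (M.cs v)] (M.N v) := by
    intro d
    induction d using Nat.strong_induction_on with
    | _ d IH =>
    intro v hd
    by_cases hv : v = M.root
    · subst hv
      rw [M.N_root]
      exact M.meas_L_mS (by simp [cs]; exact M.anc_self M.root)
    · have hpa := M.pa_dist v hv
      have h1 : Measurable[M.mS (M.cs v)] (M.N (M.pa v)) :=
        (IH (G.dist M.root (M.pa v)) (by omega) (M.pa v) rfl).mono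
          (M.mS_mono (csV_mono (M.anc_pa_subset hv))) le_rfl
      have h2 : ∀ i, Measurable[M.mS (M.cs v)] (M.I v i) := fun i =>
        M.meas_I_mS (by simpa [cs] using M.anc_self v)
      have h3 : Measurable[M.mS (M.cs v)] (M.L v) :=
        M.meas_L_mS (by simpa [cs] using M.anc_self v)
      have hfun : M.N v = fun ω => (∑ i ∈ Finset.range (M.N (M.pa v) ω), M.I v i ω) + M.L v ω :=
        funext (M.N_rec v hv)
      rw [hfun]
      refine @measurable_to_countable' ℕ Ω _ _ (M.mS (M.cs v)) _ ?_
      intro n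
      have hpre : (fun ω => (∑ i ∈ Finset.range (M.N (M.pa v) ω), M.I v i ω) + M.L v ω) ⁻¹' {n}
          = ⋃ c, {ω | M.N (M.pa v) ω = c} ∩
            {ω | (∑ i ∈ Finset.range c, M.I v i ω) + M.L v ω = n} := by
        ext ω
        simp only [Set.mem_preimage, Set.mem_singleton_iff, Set.mem_iUnion, Set.mem_inter_iff,
          Set.mem_setOf_eq]
        constructor
        · intro h
          exact ⟨_, rfl, h⟩
        · rintro ⟨c, hc, h⟩
          rw [hc]
          exact h
      rw [hpre]
      apply MeasurableSet.iUnion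
      intro c
      exact (h1 (measurableSet_singleton c)).inter
        (((Finset.measurable_sum _ (fun i _ => h2 i)).add h3) (measurableSet_singleton n))
  intro v
  exact key (G.dist M.root v) v rfl


section Lint

variable [IsProbabilityMeasure (ℙ : Measure Ω)]

lemma meas_cast {m : MeasurableSpace Ω} {X : Ω → ℕ} (hX : Measurable[m] X) :
    Measurable[m] fun ω => (X ω : ℝ≥0∞) :=
  measurable_from_top.comp hX

lemma lint_mul_of_disjoint {S T : Set (V ⊕ V × ℕ)} (h : Disjoint S T) {f g : Ω → ℝ≥0∞}
    (hf : Measurable[M.mS S] f) (hg : Measurable[M.mS T] g) :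
    ∫⁻ ω, f ω * g ω ∂ℙ = (∫⁻ ω, f ω ∂ℙ) * ∫⁻ ω, g ω ∂ℙ :=
  lintegral_mul_eq_lintegral_mul_lintegral_of_independent_measurableSpace
    (M.mS_le S) (M.mS_le T) (M.indep_mS h) hf hg

lemma lint_I {v : V} (hv : v ≠ M.root) (i : ℕ) :
    ∫⁻ ω, (M.I v i ω : ℝ≥0∞) ∂ℙ = ENNReal.ofReal (alpha s(M.pa v, v)) := by
  have hpt : (fun ω => (M.I v i ω : ℝ≥0∞))
      = fun ω => {ω | M.I v i ω = 1}.indicator (fun _ => (1:ℝ≥0∞)) ω := by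
    funext ω
    rcases Nat.le_one_iff_eq_zero_or_eq_one.mp (M.I_le_one v i ω) with h | h <;>
      simp [h, Set.indicator_apply]
  rw [hpt, lintegral_indicator_const
    (show MeasurableSet {ω | M.I v i ω = 1} from M.meas_I v i (measurableSet_singleton 1)),
    one_mul, M.I_bern v hv i]

lemma tsum_gind (n : ℕ) : ∑' i : ℕ, (if i < n then (1:ℝ≥0∞) else 0) = n := by
  rw [tsum_eq_sum (s := Finset.range n) (fun b hb => if_neg (by simpa using hb))]
  rw [Finset.sum_congr rfl (fun i hi => if_pos (Finset.mem_range.mp hi))]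
  simp

lemma sum_range_eq_tsum {a : ℕ → ℝ≥0∞} (n : ℕ) :
    ∑ i ∈ Finset.range n, a i = ∑' i, (if i < n then (1:ℝ≥0∞) else 0) * a i := by
  rw [tsum_eq_sum (s := Finset.range n)
    (fun b hb => by rw [if_neg (by simpa using hb), zero_mul])]
  exact Finset.sum_congr rfl (fun i hi => by rw [if_pos (Finset.mem_range.mp hi), one_mul])

lemma lint_L_mul {S : Set (V ⊕ V × ℕ)} {v : V} (hd : Disjoint S {(Sum.inl v : V ⊕ V × ℕ)})
    {f : Ω → ℝ≥0∞} (hf : Measurable[M.mS S] f) :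
    ∫⁻ ω, f ω * (M.L v ω : ℝ≥0∞) ∂ℙ = (∫⁻ ω, f ω ∂ℙ) * ∫⁻ ω, (M.L v ω : ℝ≥0∞) ∂ℙ :=
  M.lint_mul_of_disjoint hd hf (meas_cast (M.meas_L_mS rfl))

lemma lint_thin {SV : Set V} {v : V} (hvr : v ≠ M.root) (hv : v ∉ SV)
    {f : Ω → ℝ≥0∞} (hf : Measurable[M.mS (csV SV)] f)
    {Y : Ω → ℕ} (hY : Measurable[M.mS (csV SV)] Y) :
    ∫⁻ ω, f ω * (∑ i ∈ Finset.range (Y ω), (M.I v i ω : ℝ≥0∞)) ∂ℙ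
      = ENNReal.ofReal (alpha s(M.pa v, v)) * ∫⁻ ω, f ω * (Y ω : ℝ≥0∞) ∂ℙ := by
  have hset : ∀ i : ℕ, MeasurableSet[M.mS (csV SV)] {ω | i < Y ω} := fun i =>
    hY (show MeasurableSet (Set.Ioi i) from trivial)
  have hgm : ∀ i, Measurable[M.mS (csV SV)]
      (fun ω => if i < Y ω then (1:ℝ≥0∞) else 0) := fun i =>
    Measurable.ite (hset i) measurable_const measurable_const
  have hfg : ∀ i, Measurable[M.mS (csV SV)]
      (fun ω => f ω * (if i < Y ω then (1:ℝ≥0∞) else 0)) := fun i => hf.mul (hgm i)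
  have hIm : ∀ i, Measurable[M.mS {(Sum.inr (v, i) : V ⊕ V × ℕ)}]
      (fun ω => (M.I v i ω : ℝ≥0∞)) := fun i => meas_cast (M.meas_I_mS rfl)
  have hterm : ∀ i, ∫⁻ ω, (f ω * (if i < Y ω then (1:ℝ≥0∞) else 0)) * (M.I v i ω : ℝ≥0∞) ∂ℙ
      = (∫⁻ ω, f ω * (if i < Y ω then (1:ℝ≥0∞) else 0) ∂ℙ)
          * ENNReal.ofReal (alpha s(M.pa v, v)) := fun i => by
    rw [M.lint_mul_of_disjoint (disj_inr hv i) (hfg i) (hIm i), M.lint_I hvr i]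
  have hmeas_amb : ∀ i, Measurable
      (fun ω => (f ω * (if i < Y ω then (1:ℝ≥0∞) else 0)) * (M.I v i ω : ℝ≥0∞)) := fun i =>
    (((hfg i).mono (M.mS_le _) le_rfl)).mul (meas_cast (M.meas_I v i))
  calc ∫⁻ ω, f ω * (∑ i ∈ Finset.range (Y ω), (M.I v i ω : ℝ≥0∞)) ∂ℙ
      = ∫⁻ ω, ∑' i, (f ω * (if i < Y ω then (1:ℝ≥0∞) else 0)) * (M.I v i ω : ℝ≥0∞) ∂ℙ := by
        apply lintegral_congr
        intro ω
        rw [sum_range_eq_tsum (Y ω), ← ENNReal.tsum_mul_left]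
        congr 1
        funext i
        rw [mul_assoc]
    _ = ∑' i, ∫⁻ ω, (f ω * (if i < Y ω then (1:ℝ≥0∞) else 0)) * (M.I v i ω : ℝ≥0∞) ∂ℙ :=
        lintegral_tsum (fun i => (hmeas_amb i).aemeasurable)
    _ = ∑' i, (∫⁻ ω, f ω * (if i < Y ω then (1:ℝ≥0∞) else 0) ∂ℙ)
          * ENNReal.ofReal (alpha s(M.pa v, v)) := by
        exact tsum_congr hterm
    _ = (∑' i, ∫⁻ ω, f ω * (if i < Y ω then (1:ℝ≥0∞) else 0) ∂ℙ)
          * ENNReal.ofReal (alpha s(M.pa v, v)) := ENNReal.tsum_mul_right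
    _ = (∫⁻ ω, ∑' i, f ω * (if i < Y ω then (1:ℝ≥0∞) else 0) ∂ℙ)
          * ENNReal.ofReal (alpha s(M.pa v, v)) := by
        rw [← lintegral_tsum (fun i => ((hfg i).mono (M.mS_le _) le_rfl).aemeasurable)]
    _ = ENNReal.ofReal (alpha s(M.pa v, v)) * ∫⁻ ω, f ω * (Y ω : ℝ≥0∞) ∂ℙ := by
        rw [mul_comm]
        congr 1
        apply lintegral_congr
        intro ω
        rw [ENNReal.tsum_mul_left, tsum_gind (Y ω)]

lemma lint_thin_L {SV : Set V} {v : V} (hvr : v ≠ M.root) (hv : v ∉ SV)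
    {Y : Ω → ℕ} (hY : Measurable[M.mS (csV SV)] Y) :
    ∫⁻ ω, (∑ i ∈ Finset.range (Y ω), (M.I v i ω : ℝ≥0∞)) * (M.L v ω : ℝ≥0∞) ∂ℙ
      = ENNReal.ofReal (alpha s(M.pa v, v)) * ((∫⁻ ω, (Y ω : ℝ≥0∞) ∂ℙ)
          * ∫⁻ ω, (M.L v ω : ℝ≥0∞) ∂ℙ) := by
  have hset : ∀ i : ℕ, MeasurableSet[M.mS (csV SV)] {ω | i < Y ω} := fun i =>
    hY (show MeasurableSet (Set.Ioi i) from trivial)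
  have hgm : ∀ i, Measurable[M.mS (csV SV)]
      (fun ω => if i < Y ω then (1:ℝ≥0∞) else 0) := fun i =>
    Measurable.ite (hset i) measurable_const measurable_const
  have hgu : ∀ i, Measurable[M.mS (csV SV ∪ csI v {i})]
      (fun ω => if i < Y ω then (1:ℝ≥0∞) else 0) := fun i =>
    (hgm i).mono (M.mS_mono Set.subset_union_left) le_rfl
  have hIu : ∀ i : ℕ, Measurable[M.mS (csV SV ∪ csI v {i})]
      (fun ω => (M.I v i ω : ℝ≥0∞)) := fun i =>
    meas_cast (M.meas_I_mS (Set.mem_union_right _ (by simp [csI])))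
  have hmeas_amb : ∀ i, Measurable
      (fun ω => ((if i < Y ω then (1:ℝ≥0∞) else 0) * (M.I v i ω : ℝ≥0∞))
        * (M.L v ω : ℝ≥0∞)) := fun i =>
    ((((hgm i).mono (M.mS_le _) le_rfl)).mul (meas_cast (M.meas_I v i))).mul
      (meas_cast (M.meas_L v))
  have hterm : ∀ i, ∫⁻ ω, ((if i < Y ω then (1:ℝ≥0∞) else 0) * (M.I v i ω : ℝ≥0∞))
        * (M.L v ω : ℝ≥0∞) ∂ℙ
      = ((∫⁻ ω, (if i < Y ω then (1:ℝ≥0∞) else 0) ∂ℙ)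
          * ENNReal.ofReal (alpha s(M.pa v, v))) * ∫⁻ ω, (M.L v ω : ℝ≥0∞) ∂ℙ := fun i => by
    rw [M.lint_L_mul (disj_union_inl hv)
        (f := fun ω => (if i < Y ω then (1:ℝ≥0∞) else 0) * (M.I v i ω : ℝ≥0∞)) ((hgu i).mul (hIu i)),
      M.lint_mul_of_disjoint (disj_inr hv i) (hgm i) (meas_cast (M.meas_I_mS rfl)),
      M.lint_I hvr i]
  calc ∫⁻ ω, (∑ i ∈ Finset.range (Y ω), (M.I v i ω : ℝ≥0∞)) * (M.L v ω : ℝ≥0∞) ∂ℙ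
      = ∫⁻ ω, ∑' i, ((if i < Y ω then (1:ℝ≥0∞) else 0) * (M.I v i ω : ℝ≥0∞))
          * (M.L v ω : ℝ≥0∞) ∂ℙ := by
        apply lintegral_congr
        intro ω
        rw [sum_range_eq_tsum (Y ω), ← ENNReal.tsum_mul_right]
    _ = ∑' i, ∫⁻ ω, ((if i < Y ω then (1:ℝ≥0∞) else 0) * (M.I v i ω : ℝ≥0∞))
          * (M.L v ω : ℝ≥0∞) ∂ℙ := lintegral_tsum (fun i => (hmeas_amb i).aemeasurable)
    _ = ∑' i, ((∫⁻ ω, (if i < Y ω then (1:ℝ≥0∞) else 0) ∂ℙ)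
          * ENNReal.ofReal (alpha s(M.pa v, v))) * ∫⁻ ω, (M.L v ω : ℝ≥0∞) ∂ℙ :=
        tsum_congr hterm
    _ = ENNReal.ofReal (alpha s(M.pa v, v)) * ((∫⁻ ω, (Y ω : ℝ≥0∞) ∂ℙ)
          * ∫⁻ ω, (M.L v ω : ℝ≥0∞) ∂ℙ) := by
        rw [ENNReal.tsum_mul_right, ENNReal.tsum_mul_right,
          ← lintegral_tsum (fun i => ((hgm i).mono (M.mS_le _) le_rfl).aemeasurable)]
        have : ∫⁻ ω, ∑' i, (if i < Y ω then (1:ℝ≥0∞) else 0) ∂ℙ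
            = ∫⁻ ω, (Y ω : ℝ≥0∞) ∂ℙ := lintegral_congr (fun ω => tsum_gind (Y ω))
        rw [this]
        ring

lemma lint_thin_sq {SV : Set V} {v : V} (hvr : v ≠ M.root) (hv : v ∉ SV)
    {Y : Ω → ℕ} (hY : Measurable[M.mS (csV SV)] Y) :
    ∫⁻ ω, (∑ i ∈ Finset.range (Y ω), (M.I v i ω : ℝ≥0∞))
        * (∑ i ∈ Finset.range (Y ω), (M.I v i ω : ℝ≥0∞)) ∂ℙ
      = ENNReal.ofReal ((alpha s(M.pa v, v))^2) * ∫⁻ ω, (Y ω : ℝ≥0∞) * (Y ω : ℝ≥0∞) ∂ℙ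
        + ENNReal.ofReal (alpha s(M.pa v, v) - (alpha s(M.pa v, v))^2)
          * ∫⁻ ω, (Y ω : ℝ≥0∞) ∂ℙ := by
  have hmem := M.alpha_mem s(M.pa v, v) (G.mem_edgeSet.2 (M.pa_adj v hvr))
  have ha0 : 0 ≤ alpha s(M.pa v, v) := hmem.1
  have ha1 : alpha s(M.pa v, v) ≤ 1 := hmem.2
  have hset : ∀ i : ℕ, MeasurableSet[M.mS (csV SV)] {ω | i < Y ω} := fun i =>
    hY (show MeasurableSet (Set.Ioi i) from trivial)
  have hgm : ∀ i, Measurable[M.mS (csV SV)]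
      (fun ω => if i < Y ω then (1:ℝ≥0∞) else 0) := fun i =>
    Measurable.ite (hset i) measurable_const measurable_const
  have hgamb : ∀ i, Measurable (fun ω => if i < Y ω then (1:ℝ≥0∞) else 0) := fun i =>
    (hgm i).mono (M.mS_le _) le_rfl
  have hgg : ∀ i ω, (if i < Y ω then (1:ℝ≥0∞) else 0) * (if i < Y ω then (1:ℝ≥0∞) else 0)
      = (if i < Y ω then (1:ℝ≥0∞) else 0) := fun i ω => by
    by_cases h : i < Y ω <;> simp [h]
  have hII : ∀ i ω, (M.I v i ω : ℝ≥0∞) * (M.I v i ω : ℝ≥0∞) = (M.I v i ω : ℝ≥0∞) :=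
    fun i ω => by
    rcases Nat.le_one_iff_eq_zero_or_eq_one.mp (M.I_le_one v i ω) with h | h <;> simp [h]
  have hkey : ∀ i j : ℕ,
      ∫⁻ ω, ((if i < Y ω then (1:ℝ≥0∞) else 0) * (if j < Y ω then (1:ℝ≥0∞) else 0))
        * ((M.I v i ω : ℝ≥0∞) * (M.I v j ω : ℝ≥0∞)) ∂ℙ
      = (if i = j then ENNReal.ofReal (alpha s(M.pa v, v))
          else ENNReal.ofReal (alpha s(M.pa v, v)) * ENNReal.ofReal (alpha s(M.pa v, v)))
        * ∫⁻ ω, (if i < Y ω then (1:ℝ≥0∞) else 0) * (if j < Y ω then (1:ℝ≥0∞) else 0) ∂ℙ := by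
    intro i j
    by_cases hij : i = j
    · subst hij
      rw [if_pos rfl]
      have hpt : ∀ ω, ((if i < Y ω then (1:ℝ≥0∞) else 0) * (if i < Y ω then (1:ℝ≥0∞) else 0))
          * ((M.I v i ω : ℝ≥0∞) * (M.I v i ω : ℝ≥0∞))
          = (if i < Y ω then (1:ℝ≥0∞) else 0) * (M.I v i ω : ℝ≥0∞) := fun ω => by
        rw [hgg, hII]
      rw [lintegral_congr hpt,
        M.lint_mul_of_disjoint (disj_inr hv i) (hgm i) (meas_cast (M.meas_I_mS rfl)),
        M.lint_I hvr i, mul_comm]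
      congr 1
      exact lintegral_congr (fun ω => (hgg i ω).symm)
    · rw [if_neg hij]
      have hgu : Measurable[M.mS (csV SV ∪ csI v {i})]
          (fun ω => ((if i < Y ω then (1:ℝ≥0∞) else 0) * (if j < Y ω then (1:ℝ≥0∞) else 0))
            * (M.I v i ω : ℝ≥0∞)) :=
        (((hgm i).mul (hgm j)).mono (M.mS_mono Set.subset_union_left) le_rfl).mul
          (meas_cast (M.meas_I_mS (Set.mem_union_right _ (by simp [csI]))))
      have hj : j ∉ ({i} : Set ℕ) := by
        intro hmem'
        exact hij (Set.mem_singleton_iff.mp hmem').symm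
      calc ∫⁻ ω, ((if i < Y ω then (1:ℝ≥0∞) else 0) * (if j < Y ω then (1:ℝ≥0∞) else 0))
            * ((M.I v i ω : ℝ≥0∞) * (M.I v j ω : ℝ≥0∞)) ∂ℙ
          = ∫⁻ ω, (((if i < Y ω then (1:ℝ≥0∞) else 0) * (if j < Y ω then (1:ℝ≥0∞) else 0))
            * (M.I v i ω : ℝ≥0∞)) * (M.I v j ω : ℝ≥0∞) ∂ℙ :=
            lintegral_congr (fun ω => by ring)
        _ = (∫⁻ ω, ((if i < Y ω then (1:ℝ≥0∞) else 0) * (if j < Y ω then (1:ℝ≥0∞) else 0))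
            * (M.I v i ω : ℝ≥0∞) ∂ℙ) * ∫⁻ ω, (M.I v j ω : ℝ≥0∞) ∂ℙ :=
            M.lint_mul_of_disjoint (disj_union_inr hv hj) hgu
              (meas_cast (M.meas_I_mS (rfl : (Sum.inr (v, j) : V ⊕ V × ℕ) ∈ _)))
        _ = ((∫⁻ ω, (if i < Y ω then (1:ℝ≥0∞) else 0) * (if j < Y ω then (1:ℝ≥0∞) else 0) ∂ℙ)
            * ENNReal.ofReal (alpha s(M.pa v, v))) * ENNReal.ofReal (alpha s(M.pa v, v)) := by
            rw [M.lint_mul_of_disjoint (disj_inr hv i)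
              (f := fun ω => (if i < Y ω then (1:ℝ≥0∞) else 0) * (if j < Y ω then (1:ℝ≥0∞) else 0))
              ((hgm i).mul (hgm j))
              (meas_cast (M.meas_I_mS rfl)), M.lint_I hvr i, M.lint_I hvr j]
        _ = (ENNReal.ofReal (alpha s(M.pa v, v)) * ENNReal.ofReal (alpha s(M.pa v, v)))
            * ∫⁻ ω, (if i < Y ω then (1:ℝ≥0∞) else 0) * (if j < Y ω then (1:ℝ≥0∞) else 0) ∂ℙ := by
            ring
  -- expand both sides into double sums
  have hexp : ∀ ω, (∑ i ∈ Finset.range (Y ω), (M.I v i ω : ℝ≥0∞))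
      * (∑ i ∈ Finset.range (Y ω), (M.I v i ω : ℝ≥0∞))
      = ∑' i, ∑' j, ((if i < Y ω then (1:ℝ≥0∞) else 0) * (if j < Y ω then (1:ℝ≥0∞) else 0))
        * ((M.I v i ω : ℝ≥0∞) * (M.I v j ω : ℝ≥0∞)) := by
    intro ω
    rw [sum_range_eq_tsum (Y ω), ← ENNReal.tsum_mul_right]
    congr 1
    funext i
    rw [← ENNReal.tsum_mul_left]
    congr 1
    funext j
    ring
  have hexpY : ∀ ω, (Y ω : ℝ≥0∞) * (Y ω : ℝ≥0∞)
      = ∑' i, ∑' j, (if i < Y ω then (1:ℝ≥0∞) else 0) * (if j < Y ω then (1:ℝ≥0∞) else 0) := by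
    intro ω
    rw [← tsum_gind (Y ω), ← ENNReal.tsum_mul_right]
    congr 1
    funext i
    rw [← ENNReal.tsum_mul_left]
  have hmeas_prod : ∀ i j, Measurable (fun ω =>
      ((if i < Y ω then (1:ℝ≥0∞) else 0) * (if j < Y ω then (1:ℝ≥0∞) else 0))
        * ((M.I v i ω : ℝ≥0∞) * (M.I v j ω : ℝ≥0∞))) := fun i j =>
    ((hgamb i).mul (hgamb j)).mul ((meas_cast (M.meas_I v i)).mul (meas_cast (M.meas_I v j)))
  have hmeas_gg : ∀ i j, Measurable (fun ω =>
      (if i < Y ω then (1:ℝ≥0∞) else 0) * (if j < Y ω then (1:ℝ≥0∞) else 0)) := fun i j =>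
    (hgamb i).mul (hgamb j)
  -- LHS as double sum of key terms
  have hLHS : ∫⁻ ω, (∑ i ∈ Finset.range (Y ω), (M.I v i ω : ℝ≥0∞))
      * (∑ i ∈ Finset.range (Y ω), (M.I v i ω : ℝ≥0∞)) ∂ℙ
      = ∑' i, ∑' j, (if i = j then ENNReal.ofReal (alpha s(M.pa v, v))
          else ENNReal.ofReal (alpha s(M.pa v, v)) * ENNReal.ofReal (alpha s(M.pa v, v)))
        * ∫⁻ ω, (if i < Y ω then (1:ℝ≥0∞) else 0) * (if j < Y ω then (1:ℝ≥0∞) else 0) ∂ℙ := by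
    rw [lintegral_congr hexp, lintegral_tsum (fun i =>
      (Measurable.ennreal_tsum (fun j => hmeas_prod i j)).aemeasurable)]
    congr 1
    funext i
    rw [lintegral_tsum (fun j => (hmeas_prod i j).aemeasurable)]
    exact tsum_congr (hkey i)
  have hYY : ∫⁻ ω, (Y ω : ℝ≥0∞) * (Y ω : ℝ≥0∞) ∂ℙ
      = ∑' i, ∑' j, ∫⁻ ω, (if i < Y ω then (1:ℝ≥0∞) else 0)
          * (if j < Y ω then (1:ℝ≥0∞) else 0) ∂ℙ := by
    rw [lintegral_congr hexpY, lintegral_tsum (fun i =>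
      (Measurable.ennreal_tsum (fun j => hmeas_gg i j)).aemeasurable)]
    congr 1
    funext i
    rw [lintegral_tsum (fun j => (hmeas_gg i j).aemeasurable)]
  have hY1 : ∫⁻ ω, (Y ω : ℝ≥0∞) ∂ℙ
      = ∑' i, ∫⁻ ω, (if i < Y ω then (1:ℝ≥0∞) else 0)
          * (if i < Y ω then (1:ℝ≥0∞) else 0) ∂ℙ := by
    have : ∀ ω, (Y ω : ℝ≥0∞) = ∑' i, (if i < Y ω then (1:ℝ≥0∞) else 0)
        * (if i < Y ω then (1:ℝ≥0∞) else 0) := fun ω => by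
      rw [← tsum_gind (Y ω)]
      exact tsum_congr (fun i => (hgg i ω).symm)
    rw [lintegral_congr this, lintegral_tsum (fun i => (hmeas_gg i i).aemeasurable)]
  rw [hLHS, hYY, hY1]
  rw [← ENNReal.tsum_mul_left, ← ENNReal.tsum_mul_left]
  rw [← ENNReal.tsum_add]
  congr 1
  funext i
  rw [← ENNReal.tsum_mul_left]
  have hsingle : ∑' (j : ℕ), (if i = j then ENNReal.ofReal (alpha s(M.pa v, v)
        - alpha s(M.pa v, v) ^ 2) * ∫⁻ ω, (if i < Y ω then (1:ℝ≥0∞) else 0)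
          * (if j < Y ω then (1:ℝ≥0∞) else 0) ∂ℙ else 0)
      = ENNReal.ofReal (alpha s(M.pa v, v) - alpha s(M.pa v, v) ^ 2)
        * ∫⁻ ω, (if i < Y ω then (1:ℝ≥0∞) else 0) * (if i < Y ω then (1:ℝ≥0∞) else 0) ∂ℙ := by
    rw [tsum_eq_single i (fun j hj => if_neg (fun h => hj h.symm))]
    rw [if_pos rfl]
  rw [← hsingle, ← ENNReal.tsum_add]
  congr 1
  funext j
  by_cases hij : i = j
  · subst hij
    rw [if_pos rfl, if_pos rfl, ← add_mul]
    congr 1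
    rw [← ENNReal.ofReal_add (by positivity) (by nlinarith)]
    congr 1
    ring
  · rw [if_neg hij, if_neg hij, add_zero, ← ENNReal.ofReal_mul ha0]
    congr 2
    ring

lemma lint_thin' {v : V} (hvr : v ≠ M.root) {SV : Set V} (hv : v ∉ SV)
    {Y : Ω → ℕ} (hY : Measurable[M.mS (csV SV)] Y) :
    ∫⁻ ω, (∑ i ∈ Finset.range (Y ω), (M.I v i ω : ℝ≥0∞)) ∂ℙ
      = ENNReal.ofReal (alpha s(M.pa v, v)) * ∫⁻ ω, (Y ω : ℝ≥0∞) ∂ℙ := by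
  have h := M.lint_thin hvr hv (measurable_const (a := (1:ℝ≥0∞))) hY
  simpa using h

lemma alpha_pa_mem {v : V} (hvr : v ≠ M.root) :
    alpha s(M.pa v, v) ∈ Set.Icc (0:ℝ) 1 :=
  M.alpha_mem s(M.pa v, v) (G.mem_edgeSet.2 (M.pa_adj v hvr))

lemma lint_L_root_mean : ∫⁻ ω, (M.L M.root ω : ℝ≥0∞) ∂ℙ = ENNReal.ofReal lam :=
  lint_poisson_mean (M.meas_L _) M.lam_pos.le M.L_root_poisson

lemma lint_L_root_sq : ∫⁻ ω, (M.L M.root ω : ℝ≥0∞) ^ 2 ∂ℙ = ENNReal.ofReal (lam ^ 2 + lam) :=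
  lint_poisson_sq (M.meas_L _) M.lam_pos.le M.L_root_poisson

lemma lint_L_mean {v : V} (hvr : v ≠ M.root) :
    ∫⁻ ω, (M.L v ω : ℝ≥0∞) ∂ℙ = ENNReal.ofReal (lam * (1 - alpha s(M.pa v, v))) :=
  lint_poisson_mean (M.meas_L _)
    (mul_nonneg M.lam_pos.le (by linarith [(M.alpha_pa_mem hvr).2]))
    (M.L_poisson v hvr)

lemma lint_L_sq {v : V} (hvr : v ≠ M.root) :
    ∫⁻ ω, (M.L v ω : ℝ≥0∞) ^ 2 ∂ℙ
      = ENNReal.ofReal ((lam * (1 - alpha s(M.pa v, v))) ^ 2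
          + lam * (1 - alpha s(M.pa v, v))) :=
  lint_poisson_sq (M.meas_L _)
    (mul_nonneg M.lam_pos.le (by linarith [(M.alpha_pa_mem hvr).2]))
    (M.L_poisson v hvr)

lemma N_cast_eq {v : V} (hvr : v ≠ M.root) (ω : Ω) :
    (M.N v ω : ℝ≥0∞) = (∑ i ∈ Finset.range (M.N (M.pa v) ω), (M.I v i ω : ℝ≥0∞))
      + (M.L v ω : ℝ≥0∞) := by
  rw [M.N_rec v hvr ω]
  push_cast
  ring

lemma meas_thin_nat {v : V} : Measurable
    (fun ω => ∑ i ∈ Finset.range (M.N (M.pa v) ω), M.I v i ω) := by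
  apply measurable_to_countable'
  intro n
  have hpre : (fun ω => ∑ i ∈ Finset.range (M.N (M.pa v) ω), M.I v i ω) ⁻¹' {n}
      = ⋃ c, {ω | M.N (M.pa v) ω = c} ∩ {ω | (∑ i ∈ Finset.range c, M.I v i ω) = n} := by
    ext ω
    simp only [Set.mem_preimage, Set.mem_singleton_iff, Set.mem_iUnion, Set.mem_inter_iff,
      Set.mem_setOf_eq]
    constructor
    · intro h
      exact ⟨_, rfl, h⟩
    · rintro ⟨c, hc, h⟩
      rw [hc]
      exact h
  rw [hpre]
  apply MeasurableSet.iUnion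
  intro c
  exact ((M.meas_N (M.pa v)) (measurableSet_singleton c)).inter
    ((Finset.measurable_sum _ (fun i _ => M.meas_I v i)) (measurableSet_singleton n))

lemma meas_thin_amb {v : V} : Measurable
    (fun ω => ∑ i ∈ Finset.range (M.N (M.pa v) ω), (M.I v i ω : ℝ≥0∞)) := by
  have heq : (fun ω => ∑ i ∈ Finset.range (M.N (M.pa v) ω), (M.I v i ω : ℝ≥0∞))
      = fun ω => (((∑ i ∈ Finset.range (M.N (M.pa v) ω), M.I v i ω) : ℕ) : ℝ≥0∞) := by
    funext ω
    push_cast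
    rfl
  rw [heq]
  exact meas_cast M.meas_thin_nat

lemma E1 : ∀ v : V, ∫⁻ ω, (M.N v ω : ℝ≥0∞) ∂ℙ = ENNReal.ofReal lam := by
  have key : ∀ (d : ℕ) (v : V), G.dist M.root v = d →
      ∫⁻ ω, (M.N v ω : ℝ≥0∞) ∂ℙ = ENNReal.ofReal lam := by
    intro d
    induction d using Nat.strong_induction_on with
    | _ d IH =>
    intro v hd
    by_cases hv : v = M.root
    · subst hv
      simp only [M.N_root]
      exact M.lint_L_root_mean
    · have hpa := M.pa_dist v hv
      have hmem := M.alpha_pa_mem hv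
      have hIH := IH (G.dist M.root (M.pa v)) (by omega) (M.pa v) rfl
      have hT : Measurable (fun ω => ∑ i ∈ Finset.range (M.N (M.pa v) ω), (M.I v i ω : ℝ≥0∞)) :=
        M.meas_thin_amb
      calc ∫⁻ ω, (M.N v ω : ℝ≥0∞) ∂ℙ
          = ∫⁻ ω, (∑ i ∈ Finset.range (M.N (M.pa v) ω), (M.I v i ω : ℝ≥0∞))
              + (M.L v ω : ℝ≥0∞) ∂ℙ := lintegral_congr (M.N_cast_eq hv)
        _ = (∫⁻ ω, ∑ i ∈ Finset.range (M.N (M.pa v) ω), (M.I v i ω : ℝ≥0∞) ∂ℙ)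
              + ∫⁻ ω, (M.L v ω : ℝ≥0∞) ∂ℙ := lintegral_add_left hT _
        _ = ENNReal.ofReal (alpha s(M.pa v, v)) * ENNReal.ofReal lam
              + ENNReal.ofReal (lam * (1 - alpha s(M.pa v, v))) := by
            rw [M.lint_thin' hv (M.not_mem_anc_pa hv) (M.meas_N_mS (M.pa v)), hIH,
              M.lint_L_mean hv]
        _ = ENNReal.ofReal lam := by
            rw [← ENNReal.ofReal_mul hmem.1, ← ENNReal.ofReal_add
              (mul_nonneg hmem.1 M.lam_pos.le)
              (mul_nonneg M.lam_pos.le (by linarith [hmem.2]))]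
            congr 1
            ring
  intro v
  exact key (G.dist M.root v) v rfl

lemma E2 : ∀ v : V, ∫⁻ ω, (M.N v ω : ℝ≥0∞) * (M.N v ω : ℝ≥0∞) ∂ℙ
    = ENNReal.ofReal (lam ^ 2 + lam) := by
  have key : ∀ (d : ℕ) (v : V), G.dist M.root v = d →
      ∫⁻ ω, (M.N v ω : ℝ≥0∞) * (M.N v ω : ℝ≥0∞) ∂ℙ = ENNReal.ofReal (lam ^ 2 + lam) := by
    intro d
    induction d using Nat.strong_induction_on with
    | _ d IH =>
    intro v hd
    by_cases hv : v = M.root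
    · subst hv
      simp only [M.N_root]
      rw [← M.lint_L_root_sq]
      exact lintegral_congr (fun ω => (sq _).symm)
    · have hpa := M.pa_dist v hv
      have hmem := M.alpha_pa_mem hv
      have hIH := IH (G.dist M.root (M.pa v)) (by omega) (M.pa v) rfl
      have hT : Measurable (fun ω => ∑ i ∈ Finset.range (M.N (M.pa v) ω), (M.I v i ω : ℝ≥0∞)) :=
        M.meas_thin_amb
      have hL : Measurable (fun ω => (M.L v ω : ℝ≥0∞)) := meas_cast (M.meas_L v)
      have hYm := M.meas_N_mS (M.pa v)
      have hE1pa := M.E1 (M.pa v)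
      have hnm := M.not_mem_anc_pa hv
      have hLsq : ∫⁻ ω, (M.L v ω : ℝ≥0∞) * (M.L v ω : ℝ≥0∞) ∂ℙ
          = ENNReal.ofReal ((lam * (1 - alpha s(M.pa v, v))) ^ 2
              + lam * (1 - alpha s(M.pa v, v))) := by
        rw [← M.lint_L_sq hv]
        exact lintegral_congr (fun ω => (sq _).symm)
      calc ∫⁻ ω, (M.N v ω : ℝ≥0∞) * (M.N v ω : ℝ≥0∞) ∂ℙ
          = ∫⁻ ω, ((∑ i ∈ Finset.range (M.N (M.pa v) ω), (M.I v i ω : ℝ≥0∞))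
                * (∑ i ∈ Finset.range (M.N (M.pa v) ω), (M.I v i ω : ℝ≥0∞)))
              + (2 * ((∑ i ∈ Finset.range (M.N (M.pa v) ω), (M.I v i ω : ℝ≥0∞))
                  * (M.L v ω : ℝ≥0∞))
                + (M.L v ω : ℝ≥0∞) * (M.L v ω : ℝ≥0∞)) ∂ℙ := by
            apply lintegral_congr
            intro ω
            rw [M.N_cast_eq hv ω]
            ring
        _ = (∫⁻ ω, (∑ i ∈ Finset.range (M.N (M.pa v) ω), (M.I v i ω : ℝ≥0∞))
                * (∑ i ∈ Finset.range (M.N (M.pa v) ω), (M.I v i ω : ℝ≥0∞)) ∂ℙ)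
            + (2 * (∫⁻ ω, (∑ i ∈ Finset.range (M.N (M.pa v) ω), (M.I v i ω : ℝ≥0∞))
                  * (M.L v ω : ℝ≥0∞) ∂ℙ)
              + ∫⁻ ω, (M.L v ω : ℝ≥0∞) * (M.L v ω : ℝ≥0∞) ∂ℙ) := by
            rw [lintegral_add_left (f := fun ω => (∑ i ∈ Finset.range (M.N (M.pa v) ω), (M.I v i ω : ℝ≥0∞)) * (∑ i ∈ Finset.range (M.N (M.pa v) ω), (M.I v i ω : ℝ≥0∞))) (hT.mul hT), lintegral_add_left
              (f := fun ω => 2 * ((∑ i ∈ Finset.range (M.N (M.pa v) ω), (M.I v i ω : ℝ≥0∞)) * (M.L v ω : ℝ≥0∞)))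
              (measurable_const.mul (hT.mul hL)),
              lintegral_const_mul 2 (f := fun ω => (∑ i ∈ Finset.range (M.N (M.pa v) ω), (M.I v i ω : ℝ≥0∞)) * (M.L v ω : ℝ≥0∞)) (hT.mul hL)]
        _ = (ENNReal.ofReal ((alpha s(M.pa v, v))^2) * ENNReal.ofReal (lam ^ 2 + lam)
              + ENNReal.ofReal (alpha s(M.pa v, v) - (alpha s(M.pa v, v))^2)
                * ENNReal.ofReal lam)
            + (2 * (ENNReal.ofReal (alpha s(M.pa v, v))
                * (ENNReal.ofReal lam * ENNReal.ofReal (lam * (1 - alpha s(M.pa v, v)))))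
              + ENNReal.ofReal ((lam * (1 - alpha s(M.pa v, v))) ^ 2
                  + lam * (1 - alpha s(M.pa v, v)))) := by
            rw [M.lint_thin_sq hv hnm hYm, M.lint_thin_L hv hnm hYm, hIH, hLsq,
              M.lint_L_mean hv, M.E1 (M.pa v)]
        _ = ENNReal.ofReal (lam ^ 2 + lam) := by
            have h0 : (0:ℝ) ≤ alpha s(M.pa v, v) := hmem.1
            have h1 : alpha s(M.pa v, v) ≤ 1 := hmem.2
            have hl : (0:ℝ) ≤ lam := M.lam_pos.le
            have h1a : (0:ℝ) ≤ 1 - alpha s(M.pa v, v) := by linarith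
            have haux0 : (0:ℝ) ≤ alpha s(M.pa v, v) - (alpha s(M.pa v, v))^2 := by nlinarith
            have haux1 : (0:ℝ) ≤ lam ^ 2 + lam := by positivity
            have haux2 : (0:ℝ) ≤ (alpha s(M.pa v, v))^2 * (lam ^ 2 + lam) :=
              mul_nonneg (by positivity) haux1
            have haux3 : (0:ℝ) ≤ (alpha s(M.pa v, v) - (alpha s(M.pa v, v))^2) * lam :=
              mul_nonneg haux0 hl
            have haux4 : (0:ℝ) ≤ lam * (lam * (1 - alpha s(M.pa v, v))) :=
              mul_nonneg hl (mul_nonneg hl h1a)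
            have haux5 : (0:ℝ) ≤ alpha s(M.pa v, v) * (lam * (lam * (1 - alpha s(M.pa v, v)))) :=
              mul_nonneg h0 haux4
            rw [← ENNReal.ofReal_mul (by positivity), ← ENNReal.ofReal_mul haux0,
              ← ENNReal.ofReal_add haux2 haux3,
              ← ENNReal.ofReal_mul hl, ← ENNReal.ofReal_mul h0,
              show (2:ℝ≥0∞) = ENNReal.ofReal 2 by simp,
              ← ENNReal.ofReal_mul (by norm_num),
              ← ENNReal.ofReal_add (by nlinarith) (by nlinarith [sq_nonneg (lam * (1 - alpha s(M.pa v, v))), mul_nonneg hl h1a]),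
              ← ENNReal.ofReal_add (by nlinarith) (by nlinarith [sq_nonneg (lam * (1 - alpha s(M.pa v, v))), mul_nonneg hl h1a])]
            congr 1
            ring
  intro v
  exact key (G.dist M.root v) v rfl

lemma Mx : ∀ u v : V, ∫⁻ ω, (M.N u ω : ℝ≥0∞) * (M.N v ω : ℝ≥0∞) ∂ℙ
    = ENNReal.ofReal (lam ^ 2 + lam * ppath M.isTree alpha u v) := by
  have key : ∀ (n : ℕ) (u v : V), G.dist M.root u + G.dist M.root v = n →
      ∫⁻ ω, (M.N u ω : ℝ≥0∞) * (M.N v ω : ℝ≥0∞) ∂ℙ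
        = ENNReal.ofReal (lam ^ 2 + lam * ppath M.isTree alpha u v) := by
    intro n
    induction n using Nat.strong_induction_on with
    | _ n IH =>
    have hstep : ∀ u v : V, u ≠ v → v ≠ M.root → G.dist M.root u ≤ G.dist M.root v →
        G.dist M.root u + G.dist M.root v = n →
        ∫⁻ ω, (M.N u ω : ℝ≥0∞) * (M.N v ω : ℝ≥0∞) ∂ℙ
          = ENNReal.ofReal (lam ^ 2 + lam * ppath M.isTree alpha u v) := by
      intro u v hne hvr hle hn
      have hpa := M.pa_dist v hvr
      have hmem := M.alpha_pa_mem hvr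
      have h0 : (0:ℝ) ≤ alpha s(M.pa v, v) := hmem.1
      have h1 : alpha s(M.pa v, v) ≤ 1 := hmem.2
      have hl : (0:ℝ) ≤ lam := M.lam_pos.le
      have hv : v ∉ M.anc u ∪ M.anc (M.pa v) := by
        simp only [Set.mem_union]
        push_neg
        exact ⟨M.not_mem_anc hne hle, M.not_mem_anc_pa hvr⟩
      have hfm : Measurable[M.mS (csV (M.anc u ∪ M.anc (M.pa v)))]
          (fun ω => (M.N u ω : ℝ≥0∞)) :=
        meas_cast ((M.meas_N_mS u).mono (M.mS_mono (csV_mono Set.subset_union_left)) le_rfl)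
      have hYm : Measurable[M.mS (csV (M.anc u ∪ M.anc (M.pa v)))] (M.N (M.pa v)) :=
        (M.meas_N_mS (M.pa v)).mono (M.mS_mono (csV_mono Set.subset_union_right)) le_rfl
      have hIH : ∫⁻ ω, (M.N u ω : ℝ≥0∞) * (M.N (M.pa v) ω : ℝ≥0∞) ∂ℙ
          = ENNReal.ofReal (lam ^ 2 + lam * ppath M.isTree alpha u (M.pa v)) :=
        IH (G.dist M.root u + G.dist M.root (M.pa v)) (by omega) u (M.pa v) rfl
      have hppa : ppath M.isTree alpha u v
          = ppath M.isTree alpha u (M.pa v) * alpha s(M.pa v, v) :=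
        ppath_pa M.isTree M.pa_adj M.pa_dist alpha hne hvr hle
      have hppos := (ppath_mem_Icc M.isTree alpha M.alpha_mem u (M.pa v)).1
      calc ∫⁻ ω, (M.N u ω : ℝ≥0∞) * (M.N v ω : ℝ≥0∞) ∂ℙ
          = ∫⁻ ω, (M.N u ω : ℝ≥0∞)
                * (∑ i ∈ Finset.range (M.N (M.pa v) ω), (M.I v i ω : ℝ≥0∞))
              + (M.N u ω : ℝ≥0∞) * (M.L v ω : ℝ≥0∞) ∂ℙ := by
            apply lintegral_congr
            intro ω
            rw [M.N_cast_eq hvr ω]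
            ring
        _ = (∫⁻ ω, (M.N u ω : ℝ≥0∞)
                * (∑ i ∈ Finset.range (M.N (M.pa v) ω), (M.I v i ω : ℝ≥0∞)) ∂ℙ)
              + ∫⁻ ω, (M.N u ω : ℝ≥0∞) * (M.L v ω : ℝ≥0∞) ∂ℙ :=
            lintegral_add_left ((meas_cast (M.meas_N u)).mul M.meas_thin_amb) _
        _ = ENNReal.ofReal (alpha s(M.pa v, v))
              * ENNReal.ofReal (lam ^ 2 + lam * ppath M.isTree alpha u (M.pa v))
            + ENNReal.ofReal lam * ENNReal.ofReal (lam * (1 - alpha s(M.pa v, v))) := by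
            rw [M.lint_thin hvr hv hfm hYm, M.lint_L_mul (disj_inl hv) hfm, hIH, M.E1 u,
              M.lint_L_mean hvr]
        _ = ENNReal.ofReal (lam ^ 2 + lam * ppath M.isTree alpha u v) := by
            have hb1 : (0:ℝ) ≤ alpha s(M.pa v, v)
                * (lam ^ 2 + lam * ppath M.isTree alpha u (M.pa v)) :=
              mul_nonneg h0 (by positivity)
            have hb2 : (0:ℝ) ≤ lam * (lam * (1 - alpha s(M.pa v, v))) :=
              mul_nonneg hl (mul_nonneg hl (by linarith))
            rw [← ENNReal.ofReal_mul h0, ← ENNReal.ofReal_mul hl,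
              ← ENNReal.ofReal_add hb1 hb2, hppa]
            congr 1
            ring
    intro u v hn
    by_cases huv : u = v
    · subst huv
      rw [ppath_self, mul_one]
      exact M.E2 u
    · rcases le_total (G.dist M.root u) (G.dist M.root v) with hle | hle
      · have hvr : v ≠ M.root := by
          intro h
          rw [h] at hle
          simp only [SimpleGraph.dist_self, Nat.le_zero] at hle
          exact huv ((M.dist_root_eq_zero_iff.mp hle).trans h.symm)
        exact hstep u v huv hvr hle hn
      · have hur : u ≠ M.root := by
          intro h
          rw [h] at hle
          simp only [SimpleGraph.dist_self, Nat.le_zero] at hle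
          exact huv (((M.dist_root_eq_zero_iff.mp hle).trans h.symm)).symm
        calc ∫⁻ ω, (M.N u ω : ℝ≥0∞) * (M.N v ω : ℝ≥0∞) ∂ℙ
            = ∫⁻ ω, (M.N v ω : ℝ≥0∞) * (M.N u ω : ℝ≥0∞) ∂ℙ :=
              lintegral_congr (fun ω => mul_comm _ _)
          _ = ENNReal.ofReal (lam ^ 2 + lam * ppath M.isTree alpha v u) :=
              hstep v u (Ne.symm huv) hur hle (by omega)
          _ = ENNReal.ofReal (lam ^ 2 + lam * ppath M.isTree alpha u v) := by
              rw [ppath_symm]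
  intro u v
  exact key (G.dist M.root u + G.dist M.root v) u v rfl

end Lint

end MPMRF


/-- For the weighted adjacency matrix `A` of a tree (`A_{ii} = 1`,
`A_{ij} = α_{(i,j)}` on edges, `0` otherwise), the `d`-th max-product power of `A`
recovers the product of the weights along the unique path between any two vertices;
consequently `Cov(N_u, N_v) = λ (A^d)_{uv}` for an MPMRF on that tree. -/
theorem maxProd_power_path_products {V : Type} [Fintype V] [DecidableEq V] [Nonempty V]
    (G : SimpleGraph V) [DecidableRel G.Adj] (hG : G.IsTree)
    (alpha : Sym2 V → ℝ) (halpha : ∀ e ∈ G.edgeSet, alpha e ∈ Set.Icc (0 : ℝ) 1)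
    (A : V → V → ℝ)
    (hA : ∀ i j : V, A i j
      = if i = j then 1 else if G.Adj i j then alpha s(i, j) else 0)
    (lam : ℝ) (Ω : Type) [MeasureSpace Ω] [IsProbabilityMeasure (ℙ : Measure Ω)]
    (M : MPMRF G lam alpha Ω) :
    ∀ (u v : V) (p : G.Walk u v), p.IsPath →
      (maxPow A (Fintype.card V) u v = (p.edges.map alpha).prod
      ∧ (∫ ω, ((M.N u ω : ℝ) * (M.N v ω : ℝ)) ∂ℙ)
            - (∫ ω, (M.N u ω : ℝ) ∂ℙ) * (∫ ω, (M.N v ω : ℝ) ∂ℙ)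
          = lam * maxPow A (Fintype.card V) u v) := by
  intro u v p hp
  have hpp01 := ppath_mem_Icc hG alpha halpha u v
  have hpp0 : (0:ℝ) ≤ ppath hG alpha u v := hpp01.1
  have hl : (0:ℝ) ≤ lam := M.lam_pos.le
  have hppM : ppath M.isTree alpha u v = ppath hG alpha u v := rfl
  have hmp : maxPow A (Fintype.card V) u v = (p.edges.map alpha).prod := by
    rw [maxPow_card_eq_ppath hG alpha halpha hA u v, ppath, ← eq_treePath hG p hp]
  refine ⟨hmp, ?_⟩
  have hIuv : ∫ ω, ((M.N u ω : ℝ) * (M.N v ω : ℝ)) ∂ℙ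
      = lam ^ 2 + lam * ppath hG alpha u v := by
    have hm1 : Measurable (fun ω => (M.N u ω : ℝ) * (M.N v ω : ℝ)) :=
      (measurable_from_top.comp (M.meas_N u)).mul (measurable_from_top.comp (M.meas_N v))
    rw [MeasureTheory.integral_eq_lintegral_of_nonneg_ae
      (Filter.Eventually.of_forall (fun ω => by positivity)) hm1.aestronglyMeasurable]
    have hlint : ∫⁻ ω, ENNReal.ofReal ((M.N u ω : ℝ) * (M.N v ω : ℝ)) ∂ℙ
        = ENNReal.ofReal (lam ^ 2 + lam * ppath hG alpha u v) := by
      calc ∫⁻ ω, ENNReal.ofReal ((M.N u ω : ℝ) * (M.N v ω : ℝ)) ∂ℙ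
          = ∫⁻ ω, (M.N u ω : ℝ≥0∞) * (M.N v ω : ℝ≥0∞) ∂ℙ := by
            apply lintegral_congr
            intro ω
            rw [show ((M.N u ω : ℝ) * (M.N v ω : ℝ)) = ((M.N u ω * M.N v ω : ℕ) : ℝ) by
              push_cast; ring, ENNReal.ofReal_natCast]
            push_cast
            ring
        _ = ENNReal.ofReal (lam ^ 2 + lam * ppath hG alpha u v) := by
            rw [M.Mx u v, hppM]
    rw [hlint, ENNReal.toReal_ofReal (by nlinarith [mul_nonneg hl hpp0])]
  have hIw : ∀ w : V, ∫ ω, (M.N w ω : ℝ) ∂ℙ = lam := by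
    intro w
    have hm2 : Measurable (fun ω => (M.N w ω : ℝ)) :=
      measurable_from_top.comp (M.meas_N w)
    rw [MeasureTheory.integral_eq_lintegral_of_nonneg_ae
      (Filter.Eventually.of_forall (fun ω => by positivity)) hm2.aestronglyMeasurable]
    have hlint : ∫⁻ ω, ENNReal.ofReal ((M.N w ω : ℝ)) ∂ℙ = ENNReal.ofReal lam := by
      calc ∫⁻ ω, ENNReal.ofReal ((M.N w ω : ℝ)) ∂ℙ
          = ∫⁻ ω, (M.N w ω : ℝ≥0∞) ∂ℙ :=
            lintegral_congr (fun ω => ENNReal.ofReal_natCast _)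
        _ = ENNReal.ofReal lam := M.E1 w
    rw [hlint, ENNReal.toReal_ofReal hl]
  rw [hIuv, hIw u, hIw v, maxPow_card_eq_ppath hG alpha halpha hA u v]
  ring
end

section
/- Pgf of the sum on a star: let T be the d-vertex star (one central vertex connected by an edge to each of the other d − 1 vertices), d ≥ 2, let λ > 0, let α ∈ [0,1], and let N ~ MPMRF(λ, α, T) with α_e = α for every edge e. Then M = Σ_{v∈V} N_v has pgf E[t^M] = exp( λ(α + (1−α)d) · ( [ t(1−α+αt)^{d−1} + (1−α)(d−1)t ] / (α + (1−α)d) − 1 ) ) for t ∈ [−1,1]. Equivalently, M is compound Poisson whose secondary distribution is a mixture of a point mass at 1 and a Binomial(d−1, α) distribution shifted by one. -/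
open MeasureTheory ProbabilityTheory
open scoped ProbabilityTheory

section Helpers

lemma poissonProb_nonneg_s13 {lam : ℝ} (h : 0 ≤ lam) (k : ℕ) : 0 ≤ poissonProb lam k := by
  unfold poissonProb; positivity

variable {Ω : Type} [MeasureSpace Ω] [IsProbabilityMeasure (ℙ : Measure Ω)]

lemma integrable_of_bdd {f : Ω → ℝ} (hf : Measurable f) {C : ℝ} (h : ∀ ω, |f ω| ≤ C) :
    Integrable f ℙ :=
  (integrable_const C).mono' hf.aestronglyMeasurable (Filter.Eventually.of_forall h)

lemma indep_prod_integral {ι : Type*} {f : ι → Ω → ℝ}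
    (h : iIndepFun f ℙ) (hm : ∀ i, Measurable (f i))
    (s : Finset ι) :
    ∫ ω, ∏ i ∈ s, f i ω ∂ℙ = ∏ i ∈ s, ∫ ω, f i ω ∂ℙ := by
  classical
  induction s using Finset.cons_induction with
  | empty => simp
  | cons i s hi ih =>
    simp only [Finset.prod_cons]
    have hindep : IndepFun (f i) (∏ j ∈ s, f j) ℙ :=
      (h.indepFun_finset_prod_of_notMem hm hi).symm
    have hPe : (∏ j ∈ s, f j) = fun ω => ∏ j ∈ s, f j ω :=
      funext fun ω => Finset.prod_apply ω s f
    rw [hPe] at hindep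
    have hmp : Measurable fun ω => ∏ j ∈ s, f j ω :=
      Finset.measurable_prod s (fun j _ => hm j)
    rw [hindep.integral_fun_mul_eq_mul_integral (hm i).aestronglyMeasurable hmp.aestronglyMeasurable, ih]

omit [IsProbabilityMeasure (ℙ : Measure Ω)] in
lemma hasSum_partition {κ : Type*} [Countable κ] {s : κ → Set Ω}
    (hmeas : ∀ j, MeasurableSet (s j)) (hdisj : Pairwise (Function.onFun Disjoint s))
    (hcover : ⋃ j, s j = Set.univ)
    {f : Ω → ℝ} (hf : Integrable f ℙ) :
    HasSum (fun j => ∫ ω in s j, f ω ∂ℙ) (∫ ω, f ω ∂ℙ) := by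
  have := hasSum_integral_iUnion hmeas hdisj (hf.integrableOn (s := ⋃ j, s j))
  rwa [hcover, setIntegral_univ] at this

lemma hasSum_integral_comp_nat {X : Ω → ℕ} (hX : Measurable X) (g : ℕ → ℝ) {C : ℝ}
    (hg : ∀ k, |g k| ≤ C) :
    HasSum (fun k => (ℙ {ω | X ω = k}).toReal * g k) (∫ ω, g (X ω) ∂ℙ) := by
  have hmeas : ∀ k : ℕ, MeasurableSet {ω | X ω = k} := fun k =>
    hX (measurableSet_singleton k)
  have hdisj : Pairwise (Function.onFun Disjoint fun k : ℕ => {ω | X ω = k}) := by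
    intro k l hkl
    simp only [Set.disjoint_left]
    rintro ω (h1 : X ω = k) (h2 : X ω = l)
    exact hkl (h1 ▸ h2 ▸ rfl)
  have hcover : ⋃ k : ℕ, {ω | X ω = k} = Set.univ := by
    ext ω; simp
  have hint : Integrable (fun ω => g (X ω)) ℙ :=
    integrable_of_bdd (measurable_from_top.comp hX) (fun ω => hg (X ω))
  have H := hasSum_partition hmeas hdisj hcover hint
  convert H using 2 with k
  rw [setIntegral_congr_fun (hmeas k) (g := fun _ => g k) (fun ω hω => by
    simp only [Set.mem_setOf_eq] at hω; rw [hω]),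
    setIntegral_const, smul_eq_mul, measureReal_def]

omit [IsProbabilityMeasure (ℙ : Measure Ω)] in
lemma integral_indicator_comp_nat {X : Ω → ℕ} (hX : Measurable X) (k : ℕ) :
    ∫ ω, Set.indicator {k} (fun _ => (1:ℝ)) (X ω) ∂ℙ = (ℙ {ω | X ω = k}).toReal := by
  have : (fun ω => Set.indicator {k} (fun _ => (1:ℝ)) (X ω))
      = Set.indicator {ω | X ω = k} (fun _ => (1:ℝ)) := by
    funext ω
    by_cases h : X ω = k <;> simp [Set.indicator, h]
  have hs : MeasurableSet {ω | X ω = k} := hX (measurableSet_singleton k)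
  rw [this]
  have h2 := integral_indicator_const (μ := ℙ) (1:ℝ) hs
  simpa [measureReal_def] using h2

lemma hasSum_poisson_pgf {μ : ℝ} (x : ℝ) :
    HasSum (fun k => poissonProb μ k * x ^ k) (Real.exp (μ * (x - 1))) := by
  have h := NormedSpace.expSeries_div_hasSum_exp (μ * x)
  rw [← Real.exp_eq_exp_ℝ] at h
  have h2 := h.mul_left (Real.exp (-μ))
  rw [← Real.exp_add] at h2
  convert h2 using 2 with k
  · rfl
  · unfold poissonProb
    rw [mul_pow]
    ring
  · ring_nf

lemma integral_pow_poisson {L : Ω → ℕ} (hL : Measurable L) {μ : ℝ} (hμ : 0 ≤ μ)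
    (hP : ∀ k, ℙ {ω | L ω = k} = ENNReal.ofReal (poissonProb μ k))
    {t : ℝ} (ht : |t| ≤ 1) :
    ∫ ω, t ^ L ω ∂ℙ = Real.exp (μ * (t - 1)) := by
  have hgb : ∀ k : ℕ, |t ^ k| ≤ 1 := fun k => by
    rw [abs_pow]; exact pow_le_one₀ (abs_nonneg t) ht
  have H := hasSum_integral_comp_nat hL (fun k => t ^ k) hgb
  have H2 : HasSum (fun k => (ℙ {ω | L ω = k}).toReal * t ^ k) (Real.exp (μ * (t - 1))) := by
    have : ∀ k, (ℙ {ω | L ω = k}).toReal * t ^ k = poissonProb μ k * t ^ k := by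
      intro k
      rw [hP k, ENNReal.toReal_ofReal (poissonProb_nonneg_s13 hμ k)]
    rw [funext this]
    exact hasSum_poisson_pgf t
  exact H.unique H2

lemma prob_bern_toReal {I : Ω → ℕ} (hI : Measurable I) (hle : ∀ ω, I ω ≤ 1)
    {a : ℝ} (ha : a ∈ Set.Icc (0:ℝ) 1) (hP : ℙ {ω | I ω = 1} = ENNReal.ofReal a) :
    ∀ k : ℕ, (ℙ {ω | I ω = k}).toReal = if k = 1 then a else if k = 0 then 1 - a else 0 := by
  intro k
  match k with
  | 1 => simp [hP, ENNReal.toReal_ofReal ha.1]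
  | 0 =>
    have hc : {ω | I ω = 0} = {ω | I ω = 1}ᶜ := by
      ext ω; simp only [Set.mem_setOf_eq, Set.mem_compl_iff]
      have := hle ω; omega
    have hs : MeasurableSet {ω | I ω = 1} := hI (measurableSet_singleton 1)
    rw [if_neg one_ne_zero.symm, if_pos rfl, hc,
      prob_compl_eq_one_sub hs, hP,
      ENNReal.toReal_sub_of_le (by simpa using ENNReal.ofReal_le_one.2 ha.2) ENNReal.one_ne_top]
    simp [ENNReal.toReal_ofReal ha.1]
  | (n+2) =>
    have : {ω | I ω = n + 2} = ∅ := by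
      ext ω; simp only [Set.mem_setOf_eq, Set.mem_empty_iff_false, iff_false]
      have := hle ω; omega
    simp [this]

lemma integral_pow_bern {I : Ω → ℕ} (hI : Measurable I) (hle : ∀ ω, I ω ≤ 1)
    {a : ℝ} (ha : a ∈ Set.Icc (0:ℝ) 1) (hP : ℙ {ω | I ω = 1} = ENNReal.ofReal a)
    {t : ℝ} (ht : |t| ≤ 1) :
    ∫ ω, t ^ I ω ∂ℙ = 1 - a + a * t := by
  have hgb : ∀ k : ℕ, |t ^ k| ≤ 1 := fun k => by
    rw [abs_pow]; exact pow_le_one₀ (abs_nonneg t) ht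
  have H := hasSum_integral_comp_nat hI (fun k => t ^ k) hgb
  have hpm := prob_bern_toReal hI hle ha hP
  have H2 : HasSum (fun k : ℕ => (ℙ {ω | I ω = k}).toReal * t ^ k) (1 - a + a * t) := by
    have hne : ∀ k ∉ ({0, 1} : Finset ℕ), (ℙ {ω | I ω = k}).toReal * t ^ k = 0 := by
      intro k hk
      simp only [Finset.mem_insert, Finset.mem_singleton] at hk
      push_neg at hk
      rw [hpm k, if_neg hk.2, if_neg hk.1, zero_mul]
    have : HasSum _ _ := hasSum_sum_of_ne_finset_zero hne
    convert this using 1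
    rw [Finset.sum_insert (by simp), Finset.sum_singleton, hpm 0, hpm 1]
    norm_num
  exact H.unique H2

lemma event_integral {ι : Type*} {F : ι → Ω → ℕ}
    (hind : iIndepFun F ℙ) (hFm : ∀ i, Measurable (F i))
    (S : Finset ι) (g : ι → ℕ → ℝ) {e : Set Ω} (he : MeasurableSet e)
    {f : Ω → ℝ} (c : ℝ)
    (hon : ∀ ω ∈ e, f ω = c * ∏ i ∈ S, g i (F i ω))
    (hoff : ∀ ω ∉ e, ∏ i ∈ S, g i (F i ω) = 0) :
    ∫ ω in e, f ω ∂ℙ = c * ∏ i ∈ S, ∫ ω, g i (F i ω) ∂ℙ := by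
  rw [setIntegral_congr_fun he hon,
    setIntegral_eq_integral_of_forall_compl_eq_zero (fun ω hω => by rw [hoff ω hω, mul_zero]),
    integral_const_mul]
  congr 1
  have := indep_prod_integral (hind.comp g (fun i => measurable_from_top))
    (fun i => measurable_from_top.comp (hFm i)) S
  simpa [Function.comp] using this

end Helpers

section Fibers
variable {Ω : Type} [MeasureSpace Ω]

lemma nat_fibers_disjoint (X : Ω → ℕ) :
    Pairwise (Function.onFun Disjoint fun k : ℕ => {ω | X ω = k}) := by
  intro k l hkl
  simp only [Set.disjoint_left]
  rintro ω (h1 : X ω = k) (h2 : X ω = l)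
  exact hkl (h1 ▸ h2 ▸ rfl)

lemma nat_fibers_cover (X : Ω → ℕ) : ⋃ k : ℕ, {ω | X ω = k} = Set.univ := by
  ext ω; simp

end Fibers

/-- The `d`-vertex star: vertex `0` is connected by an edge to every other vertex. -/
def starGraph (d : ℕ) [NeZero d] : SimpleGraph (Fin d) where
  Adj i j := i ≠ j ∧ (i = 0 ∨ j = 0)
  symm := by
    constructor
    intro i j h
    exact ⟨h.1.symm, h.2.symm⟩
  loopless := by
    constructor
    intro i h
    exact h.1 rfl

section Star
variable {d : ℕ} [NeZero d] {lam : ℝ} {alpha : Sym2 (Fin d) → ℝ}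
  {Ω : Type} [MeasureSpace Ω] (M : MPMRF (starGraph d) lam alpha Ω)

lemma MPMRF.star_pa_leaf {v : Fin d} (hv : v ≠ M.root) (hv0 : v ≠ 0) : M.pa v = 0 :=
  ((M.pa_adj v hv).2).resolve_right hv0

lemma MPMRF.star_pa_zero (h0 : (0 : Fin d) ≠ M.root) : M.pa 0 = M.root := by
  have hadj : (starGraph d).Adj M.root 0 := ⟨h0.symm, Or.inr rfl⟩
  have h1 : (starGraph d).dist M.root 0 = 1 := SimpleGraph.dist_eq_one_iff_adj.mpr hadj
  have h2 := M.pa_dist 0 h0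
  rw [h1] at h2
  have h3 : (starGraph d).dist M.root (M.pa 0) = 0 := by omega
  have hreach : (starGraph d).Reachable M.root (M.pa 0) :=
    M.isTree.isConnected.preconnected M.root (M.pa 0)
  exact (hreach.dist_eq_zero_iff.mp h3).symm

end Star

/-- Pgf of the sum on a star: for the `d`-vertex star (`d ≥ 2`) with
common dependence parameter `a ∈ [0,1]` on every edge,
`E[t^M] = exp(λ(a + (1−a)d) ((t(1−a+at)^{d−1} + (1−a)(d−1)t)/(a + (1−a)d) − 1))`
for `t ∈ [−1,1]`. -/
theorem mpmrf_star_sum_pgf (d : ℕ) [NeZero d] (hd : 2 ≤ d)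
    (lam a : ℝ) (ha : a ∈ Set.Icc (0 : ℝ) 1)
    (alpha : Sym2 (Fin d) → ℝ)
    (halpha : ∀ e ∈ (starGraph d).edgeSet, alpha e = a)
    (Ω : Type) [MeasureSpace Ω] [IsProbabilityMeasure (ℙ : Measure Ω)]
    (M : MPMRF (starGraph d) lam alpha Ω) :
    ∀ t ∈ Set.Icc (-1 : ℝ) 1,
      ∫ ω, (t : ℝ) ^ (∑ v : Fin d, M.N v ω) ∂ℙ
        = Real.exp (lam * (a + (1 - a) * (d : ℝ))
            * ((t * (1 - a + a * t) ^ (d - 1) + (1 - a) * ((d : ℝ) - 1) * t)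
                / (a + (1 - a) * (d : ℝ)) - 1)) := by
    classical
  intro t ht
  have habs : |t| ≤ 1 := abs_le.mpr ⟨ht.1, ht.2⟩
  obtain ⟨ha0, ha1⟩ := ha
  have hlam := M.lam_pos
  set r := M.root with hr_def
  set b := 1 - a + a * t with hb_def
  have hbabs : |b| ≤ 1 := by
    rw [abs_le] at habs ⊢
    constructor <;> nlinarith [habs.1, habs.2]
  set E := Real.exp (lam * (1 - a) * (t - 1)) with hE_def
  set F : (Fin d ⊕ Fin d × ℕ) → Ω → ℕ := Sum.elim M.L (fun p => M.I p.1 p.2) with hF_def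
  have hFm : ∀ i, Measurable (F i) := by
    rintro (v | ⟨v, i⟩)
    exacts [M.meas_L v, M.meas_I v i]
  have hind : iIndepFun F ℙ := M.indep
  have hμ : (0:ℝ) ≤ lam * (1 - a) := by nlinarith
  have halphae : ∀ v : Fin d, v ≠ r → alpha s(M.pa v, v) = a := fun v hv =>
    halpha _ ((starGraph d).mem_edgeSet.mpr (M.pa_adj v hv))
  have hfm : Measurable (fun ω => t ^ (∑ v, M.N v ω)) :=
    measurable_from_top.comp (Finset.measurable_sum _ (fun v _ => M.meas_N v))
  have hfi : Integrable (fun ω => t ^ (∑ v, M.N v ω)) ℙ :=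
    integrable_of_bdd hfm (fun ω => by
      rw [abs_pow]; exact pow_le_one₀ (abs_nonneg t) habs)
  have hbern : ∀ v : Fin d, v ≠ r → ∀ i, ∫ ω, t ^ M.I v i ω ∂ℙ = b := by
    intro v hv i
    rw [integral_pow_bern (M.meas_I v i) (fun ω => M.I_le_one v i ω) ⟨ha0, ha1⟩
      (by rw [← halphae v hv]; exact M.I_bern v hv i) habs]
  have hpois : ∀ v : Fin d, v ≠ r → ∫ ω, t ^ M.L v ω ∂ℙ = E := by
    intro v hv
    rw [integral_pow_poisson (M.meas_L v) hμ
      (fun k => by rw [M.L_poisson v hv k, halphae v hv]) habs]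
  have hbpow : ∀ n : ℕ, b ^ n * b = b ^ (n + 1) := fun n => (pow_succ b n).symm
  -- denominator positivity
  have hden : (0:ℝ) < a + (1 - a) * (d : ℝ) := by
    have : (2:ℝ) ≤ (d:ℝ) := by exact_mod_cast hd
    nlinarith
  rcases eq_or_ne r 0 with hr0 | hr0
  · -- Case A : the root is the center
    have hpa : ∀ v : Fin d, v ≠ r → M.pa v = 0 := fun v hv =>
      ((M.pa_adj v hv).2).resolve_right (hr0 ▸ hv)
    have hNr : ∀ ω, M.N r ω = M.L r ω := fun ω => congrFun M.N_root ω
    set g : ℕ → (Fin d ⊕ Fin d × ℕ) → ℕ → ℝ := fun k i =>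
      Sum.elim
        (fun w => if w = r then Set.indicator {k} (fun _ => (1:ℝ)) else fun n => t ^ n)
        (fun _ => fun n => t ^ n) i with hg_def
    set Sk : ℕ → Finset (Fin d ⊕ Fin d × ℕ) := fun k =>
      Finset.univ.disjSum ((Finset.univ.erase r) ×ˢ Finset.range k) with hSk_def
    have hprod : ∀ k (ω : Ω), ∏ i ∈ Sk k, g k i (F i ω)
        = Set.indicator {k} (fun _ => (1:ℝ)) (M.L r ω)
          * ∏ v ∈ Finset.univ.erase r,
              ((∏ i ∈ Finset.range k, t ^ M.I v i ω) * t ^ M.L v ω) := by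
      intro k ω
      rw [hSk_def, Finset.prod_disjSum, Finset.prod_product,
        ← Finset.mul_prod_erase Finset.univ _ (Finset.mem_univ r),
        Finset.prod_mul_distrib]
      simp only [hg_def, hF_def, Sum.elim_inl, Sum.elim_inr, eq_self_iff_true, if_true]
      rw [Finset.prod_congr rfl
        (fun w hw => by rw [if_neg (Finset.ne_of_mem_erase hw)] : ∀ w ∈ Finset.univ.erase r,
          (if w = r then Set.indicator {k} (fun _ => (1:ℝ)) else fun n => t ^ n) (M.L w ω)
            = t ^ M.L w ω)]
      ring
    have hmeas : ∀ k : ℕ, MeasurableSet {ω | M.L r ω = k} := fun k =>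
      M.meas_L r (measurableSet_singleton k)
    have hterm : ∀ k : ℕ, ∫ ω in {ω | M.L r ω = k}, t ^ (∑ v, M.N v ω) ∂ℙ
        = t ^ k * (poissonProb lam k
            * (E ^ (d - 1) * b ^ ((d - 1) * k))) := by
      intro k
      rw [event_integral hind hFm (Sk k) (g k) (hmeas k) (t ^ k)
        (fun ω hω => ?_) (fun ω hω => ?_)]
      · congr 1
        rw [hSk_def, Finset.prod_disjSum,
          ← Finset.mul_prod_erase Finset.univ _ (Finset.mem_univ r)]
        have e1 : ∫ ω, g k (Sum.inl r) (F (Sum.inl r) ω) ∂ℙ = poissonProb lam k := by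
          simp only [hg_def, hF_def, Sum.elim_inl, eq_self_iff_true, if_true]
          rw [integral_indicator_comp_nat (M.meas_L r) k, hr_def, M.L_root_poisson k,
            ENNReal.toReal_ofReal (poissonProb_nonneg_s13 hlam.le k)]
        have e2 : ∀ w ∈ Finset.univ.erase r,
            ∫ ω, g k (Sum.inl w) (F (Sum.inl w) ω) ∂ℙ = E := by
          intro w hw
          simp only [hg_def, hF_def, Sum.elim_inl, if_neg (Finset.ne_of_mem_erase hw)]
          exact hpois w (Finset.ne_of_mem_erase hw)
        have e3 : ∀ p ∈ (Finset.univ.erase r) ×ˢ Finset.range k,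
            ∫ ω, g k (Sum.inr p) (F (Sum.inr p) ω) ∂ℙ = b := by
          rintro ⟨v, i⟩ hp
          have hv : v ∈ Finset.univ.erase r := (Finset.mem_product.mp hp).1
          simp only [hg_def, hF_def, Sum.elim_inr]
          exact hbern v (Finset.ne_of_mem_erase hv) i
        rw [e1, Finset.prod_congr rfl e2, Finset.prod_congr rfl e3,
          Finset.prod_const, Finset.prod_const, Finset.card_erase_of_mem (Finset.mem_univ r),
          Finset.card_univ, Fintype.card_fin, Finset.card_product, Finset.card_erase_of_mem
          (Finset.mem_univ r), Finset.card_univ, Fintype.card_fin, Finset.card_range]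
        ring
      · -- on the event
        have hLk : M.L r ω = k := hω
        rw [hprod k ω, hLk, Set.indicator_of_mem (Set.mem_singleton k) (fun _ => (1:ℝ)),
          one_mul]
        have hsum : (∑ v, M.N v ω)
            = k + ∑ v ∈ Finset.univ.erase r, ((∑ i ∈ Finset.range k, M.I v i ω) + M.L v ω) := by
          rw [← Finset.add_sum_erase Finset.univ _ (Finset.mem_univ r), hNr ω, hLk]
          congr 1
          refine Finset.sum_congr rfl (fun v hv => ?_)
          have hvr : v ≠ r := Finset.ne_of_mem_erase hv
          rw [M.N_rec v hvr ω, hpa v hvr, ← hr0, hNr ω, hLk]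
        rw [hsum, pow_add, ← Finset.prod_pow_eq_pow_sum]
        congr 1
        refine Finset.prod_congr rfl (fun v hv => ?_)
        rw [pow_add, ← Finset.prod_pow_eq_pow_sum]
      · -- off the event
        rw [hprod k ω, Set.indicator_of_notMem (by exact hω), zero_mul]
    have H1 : HasSum (fun k => t ^ k * (poissonProb lam k * (E ^ (d - 1) * b ^ ((d - 1) * k))))
        (∫ ω, t ^ (∑ v, M.N v ω) ∂ℙ) := by
      have := hasSum_partition hmeas (nat_fibers_disjoint (M.L r)) (nat_fibers_cover (M.L r)) hfi
      simpa only [hterm] using this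
    have H2 : HasSum (fun k => t ^ k * (poissonProb lam k * (E ^ (d - 1) * b ^ ((d - 1) * k))))
        (E ^ (d - 1) * Real.exp (lam * (t * b ^ (d - 1) - 1))) := by
      have h := (hasSum_poisson_pgf (μ := lam) (t * b ^ (d - 1))).mul_left (E ^ (d - 1))
      convert h using 2 with k
      · rfl
      rw [mul_pow, pow_mul]
      ring
    rw [H1.unique H2]
    -- final identity
    have hrw : lam * (a + (1 - a) * (d:ℝ))
        * ((t * b ^ (d - 1) + (1 - a) * ((d:ℝ) - 1) * t) / (a + (1 - a) * (d:ℝ)) - 1)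
        = lam * ((t * b ^ (d - 1) + (1 - a) * ((d:ℝ) - 1) * t) - (a + (1 - a) * (d:ℝ))) := by
      field_simp
    rw [hrw]
    obtain ⟨e0, rfl⟩ : ∃ e0, d = e0 + 2 := ⟨d - 2, by omega⟩
    have hd1 : e0 + 2 - 1 = e0 + 1 := rfl
    rw [hd1, hE_def, ← Real.exp_nat_mul, ← Real.exp_add]
    congr 1
    push_cast
    ring
  · -- Case B : the root is a leaf
    have h0r : (0 : Fin d) ≠ r := Ne.symm hr0
    have hpa0 : M.pa 0 = r := M.star_pa_zero h0r
    have hpaleaf : ∀ v : Fin d, v ≠ r → v ≠ 0 → M.pa v = 0 := fun v hv hv0 =>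
      M.star_pa_leaf hv hv0
    have hNr : ∀ ω, M.N r ω = M.L r ω := fun ω => congrFun M.N_root ω
    have hN0 : ∀ ω, M.N 0 ω = (∑ i ∈ Finset.range (M.L r ω), M.I 0 i ω) + M.L 0 ω := by
      intro ω
      rw [M.N_rec 0 h0r ω, hpa0, hNr ω]
    set L2 : Finset (Fin d) := (Finset.univ.erase r).erase 0 with hL2_def
    have hL2mem : ∀ v ∈ L2, v ≠ r ∧ v ≠ 0 := fun v hv =>
      ⟨Finset.ne_of_mem_erase (Finset.mem_of_mem_erase hv), Finset.ne_of_mem_erase hv⟩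
    have h0L2 : (0 : Fin d) ∈ Finset.univ.erase r := Finset.mem_erase.mpr ⟨h0r, Finset.mem_univ 0⟩
    have hL2card : L2.card = d - 2 := by
      rw [hL2_def, Finset.card_erase_of_mem h0L2,
        Finset.card_erase_of_mem (Finset.mem_univ r), Finset.card_univ, Fintype.card_fin]
      omega
    set wB : Bool → ℝ := fun c => cond c a (1 - a) with hwB_def
    set u := t * b ^ (d - 2) with hu_def
    set mf : (Σ k : ℕ, (Fin k → Bool) × ℕ) → ℕ :=
      fun j => (∑ i, cond (j.2.1 i) 1 0) + j.2.2 with hmf_def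
    set ev : (Σ k : ℕ, (Fin k → Bool) × ℕ) → Set Ω := fun j =>
      {ω | M.L r ω = j.1 ∧ (∀ i : Fin j.1, M.I 0 (i : ℕ) ω = cond (j.2.1 i) 1 0)
        ∧ M.L 0 ω = j.2.2} with hev_def
    have hevmem : ∀ (k : ℕ) (ε : Fin k → Bool) (l : ℕ) (ω : Ω),
        ω ∈ ev ⟨k, ε, l⟩ ↔ (M.L r ω = k ∧ (∀ i : Fin k, M.I 0 (i : ℕ) ω = cond (ε i) 1 0)
          ∧ M.L 0 ω = l) := fun k ε l ω => Iff.rfl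
    have hmeasE : ∀ j, MeasurableSet (ev j) := by
      rintro ⟨k, ε, l⟩
      have h1 : MeasurableSet {ω | M.L r ω = k} := M.meas_L r (measurableSet_singleton k)
      have h2 : MeasurableSet {ω | ∀ i : Fin k, M.I 0 (i : ℕ) ω = cond (ε i) 1 0} := by
        have heq : {ω | ∀ i : Fin k, M.I 0 (i : ℕ) ω = cond (ε i) 1 0}
            = ⋂ i : Fin k, {ω | M.I 0 (i : ℕ) ω = cond (ε i) 1 0} := by
          ext ω; simp
        rw [heq]
        exact MeasurableSet.iInter (fun i => M.meas_I 0 i (measurableSet_singleton _))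
      have h3 : MeasurableSet {ω | M.L 0 ω = l} := M.meas_L 0 (measurableSet_singleton l)
      exact h1.inter (h2.inter h3)
    have hdisjE : Pairwise (Function.onFun Disjoint ev) := by
      rintro ⟨k, ε, l⟩ ⟨k', ε', l'⟩ hne
      rw [Function.onFun, Set.disjoint_left]
      intro ω hω hω'
      obtain ⟨hk, hε, hl⟩ := (hevmem k ε l ω).mp hω
      obtain ⟨hk', hε', hl'⟩ := (hevmem k' ε' l' ω).mp hω'
      apply hne
      obtain rfl : k = k' := hk.symm.trans hk'
      obtain rfl : ε = ε' := by
        funext i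
        have hc : (cond (ε i) 1 0 : ℕ) = cond (ε' i) 1 0 := (hε i).symm.trans (hε' i)
        cases h1 : ε i <;> cases h2 : ε' i <;> simp [h1, h2] at hc ⊢
      obtain rfl : l = l' := hl.symm.trans hl'
      rfl
    have hcoverE : ⋃ j, ev j = Set.univ := by
      ext ω
      simp only [Set.mem_iUnion, Set.mem_univ, iff_true]
      refine ⟨⟨M.L r ω, fun i => decide (M.I 0 (i : ℕ) ω = 1), M.L 0 ω⟩,
        (hevmem _ _ _ ω).mpr ⟨rfl, fun i => ?_, rfl⟩⟩
      have hle := M.I_le_one 0 (i : ℕ) ω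
      by_cases h : M.I 0 (i : ℕ) ω = 1
      · simp [h]
      · rw [decide_eq_false h]
        simp only [Bool.cond_false]
        omega
    have hN0on : ∀ (k : ℕ) (ε : Fin k → Bool) (l : ℕ) (ω : Ω), ω ∈ ev ⟨k, ε, l⟩ →
        M.N 0 ω = mf ⟨k, ε, l⟩ := by
      intro k ε l ω hω
      obtain ⟨hk, hε, hl⟩ := (hevmem k ε l ω).mp hω
      rw [hN0 ω, hk, hl]
      show (∑ i ∈ Finset.range k, M.I 0 i ω) + l = (∑ i : Fin k, cond (ε i) 1 0) + l
      congr 1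
      rw [Finset.sum_range (fun i => M.I 0 i ω)]
      exact Finset.sum_congr rfl (fun i _ => hε i)
    set g : ∀ _ : (Σ k : ℕ, (Fin k → Bool) × ℕ), (Fin d ⊕ Fin d × ℕ) → ℕ → ℝ := fun j i =>
      Sum.elim
        (fun w => if w = r then Set.indicator {j.1} (fun _ => (1:ℝ))
          else if w = 0 then Set.indicator {j.2.2} (fun _ => (1:ℝ)) else fun n => t ^ n)
        (fun p : Fin d × ℕ => if p.1 = 0 then
            Set.indicator {if h : p.2 < j.1 then cond (j.2.1 ⟨p.2, h⟩) 1 0 else 0}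
              (fun _ => (1:ℝ))
          else fun n => t ^ n) i with hg_def
    set Sj : (Σ k : ℕ, (Fin k → Bool) × ℕ) → Finset (Fin d ⊕ Fin d × ℕ) := fun j =>
      Finset.univ.disjSum ((({0} : Finset (Fin d)) ×ˢ Finset.range j.1)
        ∪ (L2 ×ˢ Finset.range (mf j))) with hSj_def
    -- the values of g
    have hgA : ∀ (k : ℕ) (ε : Fin k → Bool) (l : ℕ) (ω : Ω),
        g ⟨k, ε, l⟩ (Sum.inl r) (F (Sum.inl r) ω)
          = Set.indicator {k} (fun _ => (1:ℝ)) (M.L r ω) := by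
      intro k ε l ω
      simp only [hg_def, hF_def, Sum.elim_inl, eq_self_iff_true, if_true]
    have hgB : ∀ (k : ℕ) (ε : Fin k → Bool) (l : ℕ) (ω : Ω),
        g ⟨k, ε, l⟩ (Sum.inl 0) (F (Sum.inl 0) ω)
          = Set.indicator {l} (fun _ => (1:ℝ)) (M.L 0 ω) := by
      intro k ε l ω
      simp only [hg_def, hF_def, Sum.elim_inl, if_neg h0r, eq_self_iff_true, if_true]
    have hgC : ∀ (k : ℕ) (ε : Fin k → Bool) (l : ℕ) (ω : Ω), ∀ w ∈ L2,
        g ⟨k, ε, l⟩ (Sum.inl w) (F (Sum.inl w) ω) = t ^ M.L w ω := by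
      intro k ε l ω w hw
      simp only [hg_def, hF_def, Sum.elim_inl, if_neg (hL2mem w hw).1, if_neg (hL2mem w hw).2]
    have hgD : ∀ (k : ℕ) (ε : Fin k → Bool) (l : ℕ) (ω : Ω) (i : ℕ),
        g ⟨k, ε, l⟩ (Sum.inr (0, i)) (F (Sum.inr (0, i)) ω)
          = Set.indicator {if h : i < k then cond (ε ⟨i, h⟩) 1 0 else 0}
              (fun _ => (1:ℝ)) (M.I 0 i ω) := by
      intro k ε l ω i
      simp only [hg_def, hF_def, Sum.elim_inr, eq_self_iff_true, if_true]
    have hgE : ∀ (k : ℕ) (ε : Fin k → Bool) (l : ℕ) (ω : Ω), ∀ v ∈ L2, ∀ (i : ℕ),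
        g ⟨k, ε, l⟩ (Sum.inr (v, i)) (F (Sum.inr (v, i)) ω) = t ^ M.I v i ω := by
      intro k ε l ω v hv i
      simp only [hg_def, hF_def, Sum.elim_inr, if_neg (hL2mem v hv).2]
    have hdisjP : ∀ (k : ℕ) (ε : Fin k → Bool) (l : ℕ),
        Disjoint (({0} : Finset (Fin d)) ×ˢ Finset.range k)
          (L2 ×ˢ Finset.range (mf ⟨k, ε, l⟩)) := by
      intro k ε l
      rw [Finset.disjoint_left]
      rintro ⟨v, i⟩ hp hq
      have h1 : v = 0 := Finset.mem_singleton.mp (Finset.mem_product.mp hp).1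
      exact (hL2mem v (Finset.mem_product.mp hq).1).2 h1
    have hsplitS : ∀ (k : ℕ) (ε : Fin k → Bool) (l : ℕ) (h : (Fin d ⊕ Fin d × ℕ) → ℝ),
        ∏ i ∈ Sj ⟨k, ε, l⟩, h i
          = (h (Sum.inl r) * (h (Sum.inl 0) * ∏ w ∈ L2, h (Sum.inl w)))
            * ((∏ i ∈ Finset.range k, h (Sum.inr (0, i)))
              * ∏ v ∈ L2, ∏ i ∈ Finset.range (mf ⟨k, ε, l⟩), h (Sum.inr (v, i))) := by
      intro k ε l h
      have : Sj ⟨k, ε, l⟩ = Finset.univ.disjSum ((({0} : Finset (Fin d)) ×ˢ Finset.range k)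
          ∪ (L2 ×ˢ Finset.range (mf ⟨k, ε, l⟩))) := rfl
      rw [this, Finset.prod_disjSum, Finset.prod_union (hdisjP k ε l),
        Finset.prod_product, Finset.prod_product, Finset.prod_singleton,
        ← Finset.mul_prod_erase Finset.univ (fun w => h (Sum.inl w)) (Finset.mem_univ r),
        ← Finset.mul_prod_erase (Finset.univ.erase r) (fun w => h (Sum.inl w)) h0L2]
    have hterm : ∀ (k : ℕ) (ε : Fin k → Bool) (l : ℕ),
        ∫ ω in ev ⟨k, ε, l⟩, t ^ (∑ v, M.N v ω) ∂ℙ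
        = t ^ (k + mf ⟨k, ε, l⟩) * (poissonProb lam k
            * (poissonProb (lam * (1 - a)) l
            * ((∏ i, wB (ε i)) * (E ^ (d - 2) * b ^ ((d - 2) * mf ⟨k, ε, l⟩))))) := by
      intro k ε l
      rw [event_integral hind hFm (Sj ⟨k, ε, l⟩) (g ⟨k, ε, l⟩) (hmeasE ⟨k, ε, l⟩)
        (t ^ (k + mf ⟨k, ε, l⟩)) (fun ω hω => ?_) (fun ω hω => ?_)]
      · congr 1
        rw [hsplitS k ε l (fun i => ∫ ω, g ⟨k, ε, l⟩ i (F i ω) ∂ℙ)]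
        have e1 : ∫ ω, g ⟨k, ε, l⟩ (Sum.inl r) (F (Sum.inl r) ω) ∂ℙ = poissonProb lam k := by
          rw [funext (hgA k ε l), integral_indicator_comp_nat (M.meas_L r) k, hr_def,
            M.L_root_poisson k, ENNReal.toReal_ofReal (poissonProb_nonneg_s13 hlam.le k)]
        have e2 : ∫ ω, g ⟨k, ε, l⟩ (Sum.inl 0) (F (Sum.inl 0) ω) ∂ℙ
            = poissonProb (lam * (1 - a)) l := by
          rw [funext (hgB k ε l), integral_indicator_comp_nat (M.meas_L 0) l,
            M.L_poisson 0 h0r l, halphae 0 h0r,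
            ENNReal.toReal_ofReal (poissonProb_nonneg_s13 hμ l)]
        have e3 : ∀ w ∈ L2, ∫ ω, g ⟨k, ε, l⟩ (Sum.inl w) (F (Sum.inl w) ω) ∂ℙ = E := by
          intro w hw
          rw [funext (fun ω => hgC k ε l ω w hw)]
          exact hpois w (hL2mem w hw).1
        have e4 : ∀ i ∈ Finset.range k,
            ∫ ω, g ⟨k, ε, l⟩ (Sum.inr (0, i)) (F (Sum.inr (0, i)) ω) ∂ℙ
              = (if h : i < k then wB (ε ⟨i, h⟩) else 0) := by
          intro i hi
          have hik : i < k := Finset.mem_range.mp hi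
          rw [funext (fun ω => hgD k ε l ω i), dif_pos hik,
            integral_indicator_comp_nat (M.meas_I 0 i) _,
            prob_bern_toReal (M.meas_I 0 i) (fun ω => M.I_le_one 0 i ω) ⟨ha0, ha1⟩
              (by rw [← halphae 0 h0r]; exact M.I_bern 0 h0r i) _,
            dif_pos hik]
          cases hc : ε ⟨i, hik⟩ <;> simp [hwB_def]
        have e5 : ∀ v ∈ L2, ∀ i ∈ Finset.range (mf ⟨k, ε, l⟩),
            ∫ ω, g ⟨k, ε, l⟩ (Sum.inr (v, i)) (F (Sum.inr (v, i)) ω) ∂ℙ = b := by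
          intro v hv i _
          rw [funext (fun ω => hgE k ε l ω v hv i)]
          exact hbern v (hL2mem v hv).1 i
        rw [e1, e2, Finset.prod_congr rfl e3, Finset.prod_congr rfl e4,
          Finset.prod_congr rfl (fun v hv => Finset.prod_congr rfl (e5 v hv))]
        have e6 : ∏ i ∈ Finset.range k, (if h : i < k then wB (ε ⟨i, h⟩) else 0)
            = ∏ i, wB (ε i) := by
          rw [Finset.prod_range (fun i => if h : i < k then wB (ε ⟨i, h⟩) else 0)]
          exact Finset.prod_congr rfl (fun i _ => by rw [dif_pos i.isLt])
        rw [e6]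
        simp only [Finset.prod_const, Finset.card_range, hL2card]
        rw [← pow_mul]
        ring
      · -- on the event
        obtain ⟨hk, hε, hl⟩ := (hevmem k ε l ω).mp hω
        have hm := hN0on k ε l ω hω
        rw [hsplitS k ε l (fun i => g ⟨k, ε, l⟩ i (F i ω)), hgA k ε l ω, hgB k ε l ω,
          Finset.prod_congr rfl (hgC k ε l ω),
          Finset.prod_congr rfl (fun i _ => hgD k ε l ω i),
          Finset.prod_congr rfl (fun v hv => Finset.prod_congr rfl
            (fun i _ => hgE k ε l ω v hv i)),
          hk, hl,
          Set.indicator_of_mem (Set.mem_singleton k) (fun _ => (1:ℝ)),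
          Set.indicator_of_mem (Set.mem_singleton l) (fun _ => (1:ℝ))]
        have hones : ∏ i ∈ Finset.range k,
            Set.indicator {if h : i < k then cond (ε ⟨i, h⟩) 1 0 else 0}
              (fun _ => (1:ℝ)) (M.I 0 i ω) = 1 := by
          apply Finset.prod_eq_one
          intro i hi
          have hik : i < k := Finset.mem_range.mp hi
          rw [dif_pos hik, hε ⟨i, hik⟩,
            Set.indicator_of_mem (Set.mem_singleton _) (fun _ => (1:ℝ))]
        rw [hones]
        have hsum : (∑ v, M.N v ω)
            = k + (mf ⟨k, ε, l⟩
              + ∑ v ∈ L2, ((∑ i ∈ Finset.range (mf ⟨k, ε, l⟩), M.I v i ω) + M.L v ω)) := by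
          rw [← Finset.add_sum_erase Finset.univ _ (Finset.mem_univ r), hNr ω, hk,
            ← Finset.add_sum_erase (Finset.univ.erase r) _ h0L2, hm]
          congr 2
          refine Finset.sum_congr rfl (fun v hv => ?_)
          rw [M.N_rec v (hL2mem v hv).1 ω, hpaleaf v (hL2mem v hv).1 (hL2mem v hv).2, hm]
        rw [hsum, pow_add, pow_add, ← Finset.prod_pow_eq_pow_sum]
        rw [Finset.prod_congr rfl (fun v hv => by
          rw [pow_add, ← Finset.prod_pow_eq_pow_sum] :
          ∀ v ∈ L2, t ^ ((∑ i ∈ Finset.range (mf ⟨k, ε, l⟩), M.I v i ω) + M.L v ω)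
            = (∏ i ∈ Finset.range (mf ⟨k, ε, l⟩), t ^ M.I v i ω) * t ^ M.L v ω),
          Finset.prod_mul_distrib]
        ring
      · -- off the event
        rw [hsplitS k ε l (fun i => g ⟨k, ε, l⟩ i (F i ω)), hgA k ε l ω, hgB k ε l ω,
          Finset.prod_congr rfl (fun i _ => hgD k ε l ω i)]
        have hω' : ¬(M.L r ω = k ∧ (∀ i : Fin k, M.I 0 (i : ℕ) ω = cond (ε i) 1 0)
            ∧ M.L 0 ω = l) := fun hc => hω ((hevmem k ε l ω).mpr hc)
        rw [not_and_or, not_and_or] at hω'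
        rcases hω' with hω' | hω' | hω'
        · have hni : M.L r ω ∉ ({k} : Set ℕ) := by simpa using hω'
          rw [Set.indicator_of_notMem hni]
          ring
        · push_neg at hω'
          obtain ⟨i, hi⟩ := hω'
          have hzero : ∏ i ∈ Finset.range k,
              Set.indicator {if h : i < k then cond (ε ⟨i, h⟩) 1 0 else 0}
                (fun _ => (1:ℝ)) (M.I 0 (i : ℕ) ω) = 0 := by
            apply Finset.prod_eq_zero (Finset.mem_range.mpr i.isLt)
            rw [dif_pos i.isLt]
            exact Set.indicator_of_notMem (by simpa using hi) _
          rw [hzero]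
          ring
        · have hni : M.L 0 ω ∉ ({l} : Set ℕ) := by simpa using hω'
          rw [Set.indicator_of_notMem hni]
          ring
    -- now sum everything
    set T : (Σ k : ℕ, (Fin k → Bool) × ℕ) → ℝ := fun j =>
      (E ^ (d - 2) * (poissonProb lam j.1 * t ^ j.1)
        * ((∏ i, wB (j.2.1 i)) * u ^ (∑ i, cond (j.2.1 i) 1 0)))
      * (poissonProb (lam * (1 - a)) j.2.2 * u ^ j.2.2) with hT_def
    have H1 : HasSum T (∫ ω, t ^ (∑ v, M.N v ω) ∂ℙ) := by
      have H0 := hasSum_partition hmeasE hdisjE hcoverE hfi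
      have heq : (fun j => ∫ ω in ev j, t ^ (∑ v, M.N v ω) ∂ℙ) = T := by
        funext j
        rcases j with ⟨k, ε, l⟩
        rw [hterm k ε l]
        show t ^ (k + mf ⟨k, ε, l⟩) * (poissonProb lam k
            * (poissonProb (lam * (1 - a)) l
            * ((∏ i, wB (ε i)) * (E ^ (d - 2) * b ^ ((d - 2) * mf ⟨k, ε, l⟩)))))
          = (E ^ (d - 2) * (poissonProb lam k * t ^ k)
              * ((∏ i, wB (ε i)) * u ^ (∑ i, cond (ε i) 1 0)))
            * (poissonProb (lam * (1 - a)) l * u ^ l)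
        have hmm : mf ⟨k, ε, l⟩ = (∑ i, cond (ε i) 1 0) + l := rfl
        rw [hmm, hu_def, pow_add, pow_add, mul_pow, mul_pow, Nat.mul_add, pow_add,
          pow_mul, pow_mul]
        ring
      rw [← heq]
      exact H0
    have hsummable := H1.summable
    rw [← H1.tsum_eq, hsummable.tsum_sigma]
    have hinner : ∀ k : ℕ, (∑' p : (Fin k → Bool) × ℕ, T ⟨k, p⟩)
        = (E ^ (d - 2) * Real.exp (lam * (1 - a) * (u - 1)))
          * (poissonProb lam k * (t * (1 - a + a * u)) ^ k) := by
      intro k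
      rw [Summable.tsum_prod (hsummable.sigma_factor k)]
      have hl : ∀ ε : Fin k → Bool, (∑' l : ℕ, T ⟨k, ε, l⟩)
          = (E ^ (d - 2) * (poissonProb lam k * t ^ k)
            * ((∏ i, wB (ε i)) * u ^ (∑ i, cond (ε i) 1 0)))
            * Real.exp (lam * (1 - a) * (u - 1)) := by
        intro ε
        show (∑' l : ℕ, (E ^ (d - 2) * (poissonProb lam k * t ^ k)
            * ((∏ i, wB (ε i)) * u ^ (∑ i, cond (ε i) 1 0)))
          * (poissonProb (lam * (1 - a)) l * u ^ l)) = _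
        rw [tsum_mul_left, (hasSum_poisson_pgf u).tsum_eq]
      rw [tsum_congr hl, tsum_fintype]
      have hsplit : ∀ ε : Fin k → Bool,
          (∏ i, wB (ε i)) * u ^ (∑ i, cond (ε i) 1 0)
            = ∏ i, (wB (ε i) * u ^ (cond (ε i) 1 0)) := by
        intro ε
        rw [← Finset.prod_pow_eq_pow_sum, Finset.prod_mul_distrib]
      have hsum2 : ∑ ε : Fin k → Bool, ∏ i, (wB (ε i) * u ^ (cond (ε i) 1 0))
          = (1 - a + a * u) ^ k := by
        have hps := Finset.prod_univ_sum (fun _ : Fin k => (Finset.univ : Finset Bool))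
          (fun _ c => wB c * u ^ (cond c 1 0))
        rw [← Fintype.piFinset_univ, ← hps]
        have hbool : ∀ i : Fin k, ∑ c : Bool, wB c * u ^ (cond c 1 0) = 1 - a + a * u := by
          intro i
          rw [Fintype.sum_bool]
          show wB true * u ^ 1 + wB false * u ^ 0 = 1 - a + a * u
          have h1 : wB true = a := rfl
          have h2 : wB false = 1 - a := rfl
          rw [h1, h2]
          ring
        rw [Finset.prod_congr rfl (fun i _ => hbool i), Finset.prod_const, Finset.card_univ,
          Fintype.card_fin]
      calc ∑ ε : Fin k → Bool,
            (E ^ (d - 2) * (poissonProb lam k * t ^ k)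
              * ((∏ i, wB (ε i)) * u ^ (∑ i, cond (ε i) 1 0)))
              * Real.exp (lam * (1 - a) * (u - 1))
          = (E ^ (d - 2) * (poissonProb lam k * t ^ k) * Real.exp (lam * (1 - a) * (u - 1)))
            * ∑ ε : Fin k → Bool, ∏ i, (wB (ε i) * u ^ (cond (ε i) 1 0)) := by
            rw [Finset.mul_sum]
            exact Finset.sum_congr rfl (fun ε _ => by rw [hsplit ε]; ring)
        _ = (E ^ (d - 2) * Real.exp (lam * (1 - a) * (u - 1)))
            * (poissonProb lam k * (t * (1 - a + a * u)) ^ k) := by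
            rw [hsum2, mul_pow]
            ring
    rw [tsum_congr hinner, tsum_mul_left,
      (hasSum_poisson_pgf (t * (1 - a + a * u))).tsum_eq]
    -- final identity
    have hrw : lam * (a + (1 - a) * (d:ℝ))
        * ((t * b ^ (d - 1) + (1 - a) * ((d:ℝ) - 1) * t) / (a + (1 - a) * (d:ℝ)) - 1)
        = lam * ((t * b ^ (d - 1) + (1 - a) * ((d:ℝ) - 1) * t) - (a + (1 - a) * (d:ℝ))) := by
      field_simp
    rw [hrw, hu_def]
    obtain ⟨e0, rfl⟩ : ∃ e0, d = e0 + 2 := ⟨d - 2, by omega⟩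
    have hd1 : e0 + 2 - 1 = e0 + 1 := rfl
    have hd2 : e0 + 2 - 2 = e0 := rfl
    rw [hd1, hd2, hE_def, ← Real.exp_nat_mul, ← Real.exp_add, ← Real.exp_add]
    congr 1
    push_cast
    ring
end
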